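/- arXiv:2206.07250 — 11 statements merged into one kernel-verified Lean document; each statement's English description precedes it below -/
import Mathlib

section
/- Let X ⊂ ℝ^d be a centrally symmetric convex body and let 𝓔 be an origin-centered ellipsoid. Suppose that every origin-centered ellipsoid 𝓔* satisfying (i) X ⊆ 𝓔* and (ii) the aspect ratio of 𝓔* is at most κ(X), also contains 𝓔. Then 𝓔 ⊆ √2 · X. -/
noncomputable section

open scoped Pointwise
open RealInnerProductSpace

/-- `A x`, viewed as a vector in Euclidean space. -/
def mulVecE {d : ℕ} (A : Matrix (Fin d) (Fin d) ℝ) (x : EuclideanSpace ℝ (Fin d)) :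
    EuclideanSpace ℝ (Fin d) :=
  WithLp.toLp 2 (A.mulVec x)

/-- The origin-centered ellipsoid determined by a matrix `A`. -/
def Ellip {d : ℕ} (A : Matrix (Fin d) (Fin d) ℝ) : Set (EuclideanSpace ℝ (Fin d)) :=
  {x | ‖mulVecE A x‖ ≤ 1}

/-- The largest singular value (= Euclidean operator norm) of a matrix. -/
def sMax {d : ℕ} (A : Matrix (Fin d) (Fin d) ℝ) : ℝ :=
  ‖Matrix.toEuclideanCLM (𝕜 := ℝ) A‖

/-- The smallest singular value of a nonsingular matrix. -/
def sMin {d : ℕ} (A : Matrix (Fin d) (Fin d) ℝ) : ℝ :=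
  (sMax A⁻¹)⁻¹

/-- Condition number (= aspect ratio of the ellipsoid `Ellip A`). -/
def condNum {d : ℕ} (A : Matrix (Fin d) (Fin d) ℝ) : ℝ :=
  sMax A / sMin A

lemma toECLM_apply {d : ℕ} (A : Matrix (Fin d) (Fin d) ℝ) (x : EuclideanSpace ℝ (Fin d)) :
    Matrix.toEuclideanCLM (𝕜 := ℝ) A x = mulVecE A x := rfl

lemma sMax_le {d : ℕ} (M : Matrix (Fin d) (Fin d) ℝ) (K : ℝ) (hK : 0 ≤ K)
    (h : ∀ x, ‖mulVecE M x‖ ≤ K * ‖x‖) : sMax M ≤ K :=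
  ContinuousLinearMap.opNorm_le_bound _ hK (fun x => by rw [toECLM_apply]; exact h x)

lemma mulVecE_special {d : ℕ} (v x : EuclideanSpace ℝ (Fin d)) (a c : ℝ) :
    mulVecE (a • (1 : Matrix (Fin d) (Fin d) ℝ) + c • Matrix.vecMulVec v v) x
      = a • x + (c * ⟪v, x⟫) • v := by
  ext i
  have hL : mulVecE (a • (1 : Matrix (Fin d) (Fin d) ℝ) + c • Matrix.vecMulVec v v) x i
      = a * x i + c * v i * ∑ j, v j * x j := by
    simp only [mulVecE, Matrix.mulVec, dotProduct, Matrix.add_apply, Matrix.smul_apply,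
      Matrix.vecMulVec_apply, smul_eq_mul, add_mul, Finset.sum_add_distrib, Finset.mul_sum]
    congr 1
    · simp [Matrix.one_apply, ite_mul, mul_ite]
    · exact Finset.sum_congr rfl fun j _ => by ring
  rw [hL]
  simp only [PiLp.add_apply, PiLp.smul_apply, smul_eq_mul, PiLp.inner_apply,
    RCLike.inner_apply, conj_trivial]
  simp only [mul_comm (x.ofLp _)]
  ring

lemma norm_combo_sq {d : ℕ} (v x : EuclideanSpace ℝ (Fin d)) (a b : ℝ) :
    ‖a • x + b • v‖ ^ 2 = a ^ 2 * ‖x‖ ^ 2 + 2 * (a * b) * ⟪v, x⟫ + b ^ 2 * ‖v‖ ^ 2 := by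
  rw [norm_add_sq_real, real_inner_smul_left, real_inner_smul_right, norm_smul, norm_smul,
    real_inner_comm x v]
  simp [mul_pow, Real.norm_eq_abs, sq_abs]
  ring

lemma normsq_special {d : ℕ} (v x : EuclideanSpace ℝ (Fin d)) (a c : ℝ) :
    ‖mulVecE (a • (1 : Matrix (Fin d) (Fin d) ℝ) + c • Matrix.vecMulVec v v) x‖ ^ 2
      = a ^ 2 * ‖x‖ ^ 2 + (2 * a * c + c ^ 2 * ‖v‖ ^ 2) * ⟪v, x⟫ ^ 2 := by
  rw [mulVecE_special, norm_combo_sq]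
  ring

lemma PP {d : ℕ} (v : EuclideanSpace ℝ (Fin d)) :
    Matrix.vecMulVec v v * Matrix.vecMulVec v v = ⟪v, v⟫ • Matrix.vecMulVec v v := by
  ext i j
  simp only [Matrix.mul_apply, Matrix.vecMulVec_apply, Matrix.smul_apply, smul_eq_mul,
    PiLp.inner_apply, RCLike.inner_apply, conj_trivial]
  rw [Finset.sum_mul]
  exact Finset.sum_congr rfl fun k _ => by ring

lemma combo_mul {d : ℕ} (v : EuclideanSpace ℝ (Fin d)) (a c a' c' : ℝ) :
    (a • (1 : Matrix (Fin d) (Fin d) ℝ) + c • Matrix.vecMulVec v v) *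
      (a' • 1 + c' • Matrix.vecMulVec v v)
      = (a * a') • 1 + (a * c' + c * a' + c * c' * ⟪v, v⟫) • Matrix.vecMulVec v v := by
  simp only [add_mul, mul_add, smul_mul_assoc, mul_smul_comm, one_mul, mul_one, PP,
    smul_smul]
  module

lemma final_arith (p N F κ R r D : ℝ) (hppos : 0 < p) (hrpos : 0 < r) (hRpos : 0 < R)
    (hκ1 : 1 ≤ κ) (hκdef : κ = R / r) (hpr : p * r ≤ 1)
    (hD : D = p^2*R^2 + κ^2 - 1) (hDpos : 0 < D)
    (hmain : p^2*N^2 + (κ^2-1)*F^2 ≤ D) (hs2F : Real.sqrt 2 < F) (hFN : F ≤ p * N) :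
    False := by
  have hs2 : (0:ℝ) < Real.sqrt 2 := by positivity
  have hF2 : 2 < F^2 := by
    have h2 : Real.sqrt 2 * Real.sqrt 2 = 2 := Real.mul_self_sqrt (by norm_num)
    nlinarith [mul_self_lt_mul_self hs2.le hs2F]
  have hpR : p * R ≤ κ := by
    rw [hκdef, le_div_iff₀ hrpos]
    nlinarith
  have hκ2 : 0 ≤ κ^2 - 1 := by nlinarith [sq_nonneg (κ-1)]
  have hp2R2 : p^2*R^2 ≤ κ^2 := by nlinarith [mul_pos hppos hRpos]
  rcases le_or_gt (p^2*N^2) 2 with hc | hc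
  · have hFpos : 0 < F := lt_trans hs2 hs2F
    nlinarith [mul_self_le_mul_self hFpos.le hFN]
  · nlinarith [mul_le_mul_of_nonneg_left hF2.le hκ2, hmain, hD, hp2R2, hc]

set_option maxHeartbeats 1000000 in
/-- If every origin-centered ellipsoid that contains the centrally symmetric convex body `X`
and has aspect ratio at most `κ(X) = R / r` also contains the origin-centered ellipsoid `E`,
then `E ⊆ √2 • X`. -/
theorem stmt0 (d : ℕ) (X : Set (EuclideanSpace ℝ (Fin d)))
    (hXcomp : IsCompact X) (hXconv : Convex ℝ X) (hXint : (interior X).Nonempty)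
    (hXsymm : X = -X)
    (r R : ℝ)
    (hr : IsGreatest {s : ℝ | Metric.closedBall (0 : EuclideanSpace ℝ (Fin d)) s ⊆ X} r)
    (hR : IsLeast {s : ℝ | X ⊆ Metric.closedBall (0 : EuclideanSpace ℝ (Fin d)) s} R)
    (E : Set (EuclideanSpace ℝ (Fin d)))
    (A : Matrix (Fin d) (Fin d) ℝ) (hA : A.det ≠ 0) (hE : E = Ellip A)
    (h : ∀ B : Matrix (Fin d) (Fin d) ℝ,
      B.det ≠ 0 → X ⊆ Ellip B → condNum B ≤ R / r → E ⊆ Ellip B) :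
    E ⊆ Real.sqrt 2 • X := by
  intro y hyE
  by_contra hy
  -- 0 is an interior point of X
  obtain ⟨u0, hu0⟩ := hXint
  have hXneg1 : ((-1 : ℝ)) • X = X := by
    rw [show ((-1:ℝ)) = -(1:ℝ) by norm_num, Set.neg_smul_set, one_smul, ← hXsymm]
  have hneg : -u0 ∈ interior X := by
    have h1 := Set.smul_mem_smul_set (a := (-1 : ℝ)) hu0
    rw [← interior_smul₀ (by norm_num : ((-1:ℝ)) ≠ 0), hXneg1, neg_one_smul] at h1
    exact h1
  have h0int : (0 : EuclideanSpace ℝ (Fin d)) ∈ interior X := by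
    have := hXconv.interior hu0 hneg (by norm_num : (0:ℝ) ≤ (1:ℝ)/2)
      (by norm_num : (0:ℝ) ≤ (1:ℝ)/2) (by norm_num)
    simpa [smul_neg] using this
  have h0X : (0 : EuclideanSpace ℝ (Fin d)) ∈ X := interior_subset h0int
  -- r > 0
  obtain ⟨ε, hε, hball⟩ := Metric.mem_nhds_iff.mp (mem_interior_iff_mem_nhds.mp h0int)
  have hrpos : 0 < r := by
    have hsub : Metric.closedBall (0 : EuclideanSpace ℝ (Fin d)) (ε/2) ⊆ X :=
      (Metric.closedBall_subset_ball (by linarith)).trans hball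
    have := hr.2 hsub
    linarith
  -- separation
  have hSconv : Convex ℝ (Real.sqrt 2 • X) := hXconv.smul _
  have hSclosed : IsClosed (Real.sqrt 2 • X) := (hXcomp.smul (Real.sqrt 2)).isClosed
  obtain ⟨f, u, hfu, huf⟩ := geometric_hahn_banach_closed_point hSconv hSclosed hy
  have hupos : 0 < u := by
    have h0S : (0 : EuclideanSpace ℝ (Fin d)) ∈ Real.sqrt 2 • X :=
      ⟨0, h0X, smul_zero _⟩
    have := hfu 0 h0S
    simpa using this
  set v : EuclideanSpace ℝ (Fin d) :=
    (Real.sqrt 2 / u) • ((InnerProductSpace.toDual ℝ _).symm f) with hv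
  have hvx : ∀ x : EuclideanSpace ℝ (Fin d), ⟪v, x⟫ = (Real.sqrt 2 / u) * f x := by
    intro x
    rw [hv, real_inner_smul_left, InnerProductSpace.toDual_symm_apply]
  have hs2 : (0:ℝ) < Real.sqrt 2 := by positivity
  have hvX : ∀ x ∈ X, ⟪v, x⟫ ≤ 1 := by
    intro x hx
    have hmem : Real.sqrt 2 • x ∈ Real.sqrt 2 • X := Set.smul_mem_smul_set hx
    have := hfu _ hmem
    rw [map_smul] at this
    rw [hvx]
    rw [div_mul_eq_mul_div, div_le_one hupos]
    simpa [smul_eq_mul] using this.le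
  have hvy : Real.sqrt 2 < ⟪v, y⟫ := by
    rw [hvx]
    rw [div_mul_eq_mul_div, lt_div_iff₀ hupos]
    calc Real.sqrt 2 * u < Real.sqrt 2 * f y := by
          exact (mul_lt_mul_iff_right₀ hs2).mpr huf
      _ = Real.sqrt 2 * f y := rfl
  -- v ≠ 0 and bounds
  have hvne : v ≠ 0 := by
    intro h0
    rw [h0] at hvy
    simp at hvy
    linarith
  clear_value v
  set p : ℝ := ‖v‖ with hpdef
  clear_value p
  have hppos : 0 < p := by rw [hpdef]; exact norm_pos_iff.mpr hvne
  have hvv : ⟪v, v⟫ = p ^ 2 := by rw [hpdef]; exact real_inner_self_eq_norm_sq v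
  have hxrv : ((r/p) • v) ∈ X := by
    apply hr.1
    rw [Metric.mem_closedBall, dist_zero_right, norm_smul, Real.norm_eq_abs,
      abs_of_pos (by positivity : (0:ℝ) < r/p)]
    rw [div_mul_eq_mul_div, ← hpdef]
    rw [mul_div_assoc, div_self hppos.ne', mul_one]
  have hpr : p * r ≤ 1 := by
    have := hvX _ hxrv
    rw [real_inner_smul_right, hvv] at this
    calc p * r = (r/p) * p^2 := by field_simp
      _ ≤ 1 := this
  have hrR : r ≤ R := by
    have := hR.1 hxrv
    rw [Metric.mem_closedBall, dist_zero_right, norm_smul, Real.norm_eq_abs,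
      abs_of_pos (by positivity : (0:ℝ) < r/p), ← hpdef, div_mul_cancel₀ _ hppos.ne'] at this
    exact this
  have hRpos : 0 < R := lt_of_lt_of_le hrpos hrR
  -- parameters
  set κ : ℝ := R / r with hκdef
  clear_value κ
  have hκ1 : 1 ≤ κ := by rw [hκdef]; exact (one_le_div hrpos).mpr hrR
  set D : ℝ := p^2 * R^2 + κ^2 - 1 with hD
  clear_value D
  have hDpos : 0 < D := by
    rw [hD]
    have h1 : 0 < p^2 * R^2 := by positivity
    nlinarith [sq_nonneg (κ - 1)]
  set α : ℝ := p / Real.sqrt D with hαdef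
  clear_value α
  have hsD : Real.sqrt D ^ 2 = D := Real.sq_sqrt hDpos.le
  have hsDpos : 0 < Real.sqrt D := Real.sqrt_pos.mpr hDpos
  have hαpos : 0 < α := by rw [hαdef]; positivity
  have hα2 : α ^ 2 = p ^ 2 / D := by
    rw [hαdef, div_pow, hsD]
  set β : ℝ := (κ - 1) * α with hβdef
  clear_value β
  have hβnn : 0 ≤ β := by rw [hβdef]; exact mul_nonneg (by linarith) hαpos.le
  have hαβ : α + β = κ * α := by rw [hβdef]; ring
  have hαβpos : 0 < α + β := by
    rw [hαβ]; exact mul_pos (lt_of_lt_of_le one_pos hκ1) hαpos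
  set c : ℝ := β / p^2 with hcdef
  clear_value c
  set a' : ℝ := α⁻¹ with ha'def
  clear_value a'
  set c' : ℝ := -(c / (α * (α + β))) with hc'def
  clear_value c'
  set lam : ℝ := (κ^2 - 1) / D with hlam
  clear_value lam
  have hlamnn : 0 ≤ lam := by
    rw [hlam]
    apply div_nonneg _ hDpos.le
    nlinarith
  -- the matrix B and its inverse
  set B : Matrix (Fin d) (Fin d) ℝ := α • 1 + c • Matrix.vecMulVec v v with hBdef
  set C : Matrix (Fin d) (Fin d) ℝ := a' • 1 + c' • Matrix.vecMulVec v v with hCdef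
  have hBC : B * C = 1 := by
    rw [hBdef, hCdef, combo_mul, hvv]
    have h1 : α * a' = 1 := by rw [ha'def]; exact mul_inv_cancel₀ hαpos.ne'
    have h2 : α * c' + c * a' + c * c' * p ^ 2 = 0 := by
      rw [hc'def, ha'def, hcdef]
      field_simp [hαpos.ne', hαβpos.ne', hppos.ne']
      ring
    rw [h1, h2, zero_smul, add_zero, one_smul]
  have hdetB : B.det ≠ 0 := by
    intro h0
    have := congrArg Matrix.det hBC
    rw [Matrix.det_mul, Matrix.det_one, h0, zero_mul] at this
    exact zero_ne_one this
  have hBinv : B⁻¹ = C := Matrix.inv_eq_right_inv hBC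
  -- coefficient identities
  have hcoefB : 2 * α * c + c ^ 2 * p ^ 2 = lam := by
    have h1 : 2 * α * c + c ^ 2 * p ^ 2 = (κ^2 - 1) * (α^2 / p^2) := by
      rw [hcdef, hβdef]
      field_simp [hppos.ne']
      ring
    rw [h1, hα2, hlam]
    field_simp [hppos.ne', hDpos.ne']
  have hnormB : ∀ x : EuclideanSpace ℝ (Fin d),
      ‖mulVecE B x‖ ^ 2 = α ^ 2 * ‖x‖ ^ 2 + lam * ⟪v, x⟫ ^ 2 := by
    intro x
    rw [hBdef, normsq_special, ← hpdef, hcoefB]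
  -- X ⊆ Ellip B
  have hXB : X ⊆ Ellip B := by
    intro x hx
    have hxR : ‖x‖ ≤ R := by
      have := hR.1 hx
      rwa [Metric.mem_closedBall, dist_zero_right] at this
    have hx1 : ⟪v, x⟫ ≤ 1 := hvX x hx
    have hx2 : -1 ≤ ⟪v, x⟫ := by
      have hnx : -x ∈ X := by
        rw [hXsymm]; simpa using hx
      have := hvX _ hnx
      rw [inner_neg_right] at this
      linarith
    have hxsq : ⟪v, x⟫ ^ 2 ≤ 1 := by nlinarith
    have hkey : ‖mulVecE B x‖ ^ 2 ≤ 1 := by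
      rw [hnormB]
      have h1 : α ^ 2 * ‖x‖ ^ 2 ≤ α ^ 2 * R ^ 2 := by
        have h3 : ‖x‖ ^ 2 ≤ R ^ 2 := by nlinarith [norm_nonneg x]
        exact mul_le_mul_of_nonneg_left h3 (sq_nonneg α)
      have h2 : α ^ 2 * R ^ 2 + lam = 1 := by
        rw [hα2, hlam]
        field_simp
        linarith [hD]
      nlinarith [mul_le_mul_of_nonneg_left hxsq hlamnn]
    show ‖mulVecE B x‖ ≤ 1
    have h4 : ‖mulVecE B x‖ ^ 2 ≤ 1 ^ 2 := by rw [one_pow]; exact hkey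
    exact le_of_pow_le_pow_left₀ two_ne_zero zero_le_one h4
  -- condition number bound
  have hκαpos : 0 < κ * α := mul_pos (lt_of_lt_of_le one_pos hκ1) hαpos
  have hsMaxB : sMax B ≤ κ * α := by
    apply sMax_le _ _ hκαpos.le
    intro x
    have hCS : ⟪v, x⟫ ^ 2 ≤ p ^ 2 * ‖x‖ ^ 2 := by
      have h1 : |⟪v, x⟫| ≤ p * ‖x‖ := by
        rw [hpdef]; exact abs_real_inner_le_norm v x
      have h2 : ⟪v, x⟫ ^ 2 = |⟪v, x⟫| ^ 2 := (sq_abs _).symm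
      rw [h2]
      nlinarith [abs_nonneg ⟪v, x⟫, norm_nonneg x, hppos]
    have hkey : ‖mulVecE B x‖ ^ 2 ≤ (κ * α * ‖x‖) ^ 2 := by
      rw [hnormB]
      have hid : α ^ 2 + lam * p ^ 2 = (κ * α) ^ 2 := by
        rw [mul_pow, hα2, hlam]
        field_simp [hDpos.ne']
        ring
      nlinarith [mul_le_mul_of_nonneg_left hCS hlamnn, sq_nonneg (κ * α)]
    exact le_of_pow_le_pow_left₀ two_ne_zero (by positivity) hkey
  have hcoefC : 2 * a' * c' + c' ^ 2 * p ^ 2 ≤ 0 := by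
    have hid : 2 * a' * c' + c' ^ 2 * p ^ 2 = (((α + β)⁻¹) ^ 2 - α⁻¹ ^ 2) / p ^ 2 := by
      rw [ha'def, hc'def, hcdef]
      field_simp [hαpos.ne', hαβpos.ne', hppos.ne']
      ring
    rw [hid]
    apply div_nonpos_of_nonpos_of_nonneg _ (sq_nonneg p)
    have h1 : (α + β)⁻¹ ≤ α⁻¹ := by
      apply inv_anti₀ hαpos
      linarith
    have h2 : 0 < (α + β)⁻¹ := by positivity
    rw [sub_nonpos, sq, sq]
    exact mul_self_le_mul_self h2.le h1
  have hainvpos : 0 < α⁻¹ := inv_pos.mpr hαpos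
  have hsMaxC : sMax C ≤ α⁻¹ := by
    apply sMax_le _ _ hainvpos.le
    intro x
    have hkey : ‖mulVecE C x‖ ^ 2 ≤ (α⁻¹ * ‖x‖) ^ 2 := by
      rw [hCdef, normsq_special, ← hpdef, mul_pow, ← ha'def]
      linarith [mul_nonneg (neg_nonneg.mpr hcoefC) (sq_nonneg (⟪v, x⟫ : ℝ))]
    exact le_of_pow_le_pow_left₀ two_ne_zero (by positivity) hkey
  have hcond : condNum B ≤ κ := by
    rw [condNum, sMin, div_eq_mul_inv, inv_inv, hBinv]
    calc sMax B * sMax C ≤ (κ * α) * α⁻¹ := by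
          apply mul_le_mul hsMaxB hsMaxC (norm_nonneg _) hκαpos.le
      _ = κ := by rw [mul_assoc, mul_inv_cancel₀ hαpos.ne', mul_one]
  -- apply hypothesis
  have hyB : y ∈ Ellip B := h B hdetB hXB hcond hyE
  have hyB2 : α ^ 2 * ‖y‖ ^ 2 + lam * ⟪v, y⟫ ^ 2 ≤ 1 := by
    have h1 : ‖mulVecE B y‖ ≤ 1 := hyB
    have h2 := mul_self_le_mul_self (norm_nonneg (mulVecE B y)) h1
    rw [← hnormB, sq]
    linarith [h2]
  -- final contradiction
  have hmainD : p^2 * ‖y‖^2 + (κ^2 - 1) * ⟪v, y⟫^2 ≤ D := by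
    have h1 : (p^2 * ‖y‖^2 + (κ^2 - 1) * ⟪v, y⟫^2) / D
        = α ^ 2 * ‖y‖ ^ 2 + lam * ⟪v, y⟫ ^ 2 := by
      rw [hα2, hlam]; ring
    have h2 : (p^2 * ‖y‖^2 + (κ^2 - 1) * ⟪v, y⟫^2) / D ≤ 1 := by rw [h1]; exact hyB2
    exact (div_le_one hDpos).mp h2
  have hFN : ⟪v, y⟫ ≤ p * ‖y‖ := by rw [hpdef]; exact real_inner_le_norm v y
  exact final_arith p ‖y‖ ⟪v, y⟫ κ R r D hppos hrpos hRpos hκ1 hκdef hpr hD hDpos hmainD hvy hFN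
end
end

section
/- Let X ⊂ ℝ^d be a centrally symmetric convex body, let q ≥ 1/κ(X), and set δ = √(1 + 1/q²) − 1. Let E_q be the collection of all origin-centered ellipsoids 𝓔 with X ⊆ 𝓔 and aspect ratio of 𝓔 at most q·κ(X), and let 𝓐_q = ⋂_{𝓔 ∈ E_q} 𝓔. Then (1/(1+δ)) · 𝓐_q ⊆ X ⊆ 𝓐_q. -/
noncomputable section
open scoped Pointwise
open scoped RealInnerProductSpace

variable {d : ℕ}

/-- The continuous linear map `x ↦ a • x + (b * ⟪u,x⟫) • u`. -/
def lmap (u : EuclideanSpace ℝ (Fin d)) (a b : ℝ) :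
    EuclideanSpace ℝ (Fin d) →L[ℝ] EuclideanSpace ℝ (Fin d) :=
  LinearMap.toContinuousLinearMap
  { toFun := fun x => a • x + (b * ⟪u, x⟫) • u
    map_add' := by
      intro x y
      simp only [inner_add_right]
      module
    map_smul' := by
      intro c x
      simp only [real_inner_smul_right, RingHom.id_apply]
      module }

lemma lmap_apply (u : EuclideanSpace ℝ (Fin d)) (a b : ℝ) (x : EuclideanSpace ℝ (Fin d)) :
    lmap u a b x = a • x + (b * ⟪u, x⟫) • u := rfl

lemma lmap_norm_sq {u : EuclideanSpace ℝ (Fin d)} (hu : ‖u‖ = 1) (a b : ℝ)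
    (x : EuclideanSpace ℝ (Fin d)) :
    ‖lmap u a b x‖ ^ 2 = a ^ 2 * (‖x‖ ^ 2 - ⟪u, x⟫ ^ 2) + (a + b) ^ 2 * ⟪u, x⟫ ^ 2 := by
  have huu : ⟪u, u⟫ = 1 := by
    rw [real_inner_self_eq_norm_sq, hu]; norm_num
  have hd : lmap u a b x = a • (x - ⟪u, x⟫ • u) + ((a + b) * ⟪u, x⟫) • u := by
    rw [lmap_apply]; module
  have h1 : ⟪a • (x - ⟪u, x⟫ • u), ((a + b) * ⟪u, x⟫) • u⟫ = 0 := by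
    rw [real_inner_smul_left, real_inner_smul_right, inner_sub_left, real_inner_smul_left,
      huu, real_inner_comm x u]
    ring
  have h2 : ‖x - ⟪u, x⟫ • u‖ ^ 2 = ‖x‖ ^ 2 - ⟪u, x⟫ ^ 2 := by
    rw [norm_sub_sq_real, real_inner_smul_right, norm_smul, real_inner_comm x u]
    simp [hu, mul_pow, sq_abs]
    ring
  rw [hd, norm_add_sq_real, h1, norm_smul, norm_smul, Real.norm_eq_abs, Real.norm_eq_abs,
    mul_pow, mul_pow, sq_abs, sq_abs, h2, hu]
  ring

lemma lmap_lmap {u : EuclideanSpace ℝ (Fin d)} (hu : ‖u‖ = 1) (a b a' b' : ℝ)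
    (x : EuclideanSpace ℝ (Fin d)) :
    lmap u a b (lmap u a' b' x) = lmap u (a * a') (a * b' + b * a' + b * b') x := by
  have huu : ⟪u, u⟫ = 1 := by
    rw [real_inner_self_eq_norm_sq, hu]; norm_num
  simp only [lmap_apply, inner_add_right, real_inner_smul_right, huu]
  module

lemma lmap_id (u : EuclideanSpace ℝ (Fin d)) (x : EuclideanSpace ℝ (Fin d)) :
    lmap u 1 0 x = x := by
  simp [lmap_apply]

lemma le_of_sq_le_sq' {a b : ℝ} (ha : 0 ≤ a) (hb : 0 ≤ b) (h : a ^ 2 ≤ b ^ 2) : a ≤ b := by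
  nlinarith

lemma sq_le_sq_of_le' {a b : ℝ} (ha : 0 ≤ a) (h : a ≤ b) : a ^ 2 ≤ b ^ 2 := by nlinarith

lemma sq_le_of_abs_le' {t n : ℝ} (h : |t| ≤ n) : t ^ 2 ≤ n ^ 2 := by
  have := sq_le_sq_of_le' (abs_nonneg t) h
  rwa [sq_abs] at this

lemma quad_le1 (ia ib t n : ℝ) (h1 : ia ^ 2 ≤ ib ^ 2) (h2 : t ^ 2 ≤ n ^ 2) :
    ia ^ 2 * (n ^ 2 - t ^ 2) + ib ^ 2 * t ^ 2 ≤ (ib * n) ^ 2 := by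
  nlinarith [mul_nonneg (sub_nonneg.mpr h1) (sub_nonneg.mpr h2)]

lemma quad_le2 (a b t n : ℝ) (h1 : b ^ 2 ≤ a ^ 2) :
    a ^ 2 * (n ^ 2 - t ^ 2) + b ^ 2 * t ^ 2 ≤ (a * n) ^ 2 := by
  nlinarith [mul_nonneg (sub_nonneg.mpr h1) (sq_nonneg t)]

lemma quad_mono (ia ib t n hh Rr : ℝ) (h1 : ia ^ 2 ≤ ib ^ 2) (h2 : t ^ 2 ≤ hh ^ 2)
    (h3 : n ≤ Rr) (h4 : 0 ≤ n) :
    ia ^ 2 * (n ^ 2 - t ^ 2) + ib ^ 2 * t ^ 2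
      ≤ ia ^ 2 * (Rr ^ 2 - hh ^ 2) + ib ^ 2 * hh ^ 2 := by
  have hn : n ^ 2 ≤ Rr ^ 2 := sq_le_sq_of_le' h4 h3
  nlinarith [mul_nonneg (sub_nonneg.mpr h1) (sub_nonneg.mpr h2),
    mul_nonneg (sq_nonneg ia) (sub_nonneg.mpr hn)]

lemma one_lt_sq' {x : ℝ} (h : 1 < x) : 1 < x ^ 2 := by nlinarith

lemma sq_le_one' {a : ℝ} (ha : 0 ≤ a) (h : a ≤ 1) : a ^ 2 ≤ 1 := by nlinarith

lemma mulVecE_eq_clm {d : ℕ} (A : Matrix (Fin d) (Fin d) ℝ) (x : EuclideanSpace ℝ (Fin d)) :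
    mulVecE A x = Matrix.toEuclideanCLM (𝕜 := ℝ) A x := rfl

set_option maxHeartbeats 1000000 in
/-- Every centrally symmetric convex body `X` is well-approximated by the intersection `𝓐_q`
of all origin-centered ellipsoids containing `X` whose aspect ratio is at most `q · κ(X)`:
`(1/(1+δ)) • 𝓐_q ⊆ X ⊆ 𝓐_q`, where `δ = √(1 + 1/q²) - 1`. -/
theorem stmt1 (d : ℕ) (X : Set (EuclideanSpace ℝ (Fin d)))
    (hXcomp : IsCompact X) (hXconv : Convex ℝ X) (hXint : (interior X).Nonempty)
    (hXsymm : X = -X)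
    (r R : ℝ)
    (hr : IsGreatest {s : ℝ | Metric.closedBall (0 : EuclideanSpace ℝ (Fin d)) s ⊆ X} r)
    (hR : IsLeast {s : ℝ | X ⊆ Metric.closedBall (0 : EuclideanSpace ℝ (Fin d)) s} R)
    (q δ : ℝ) (hq : (R / r)⁻¹ ≤ q) (hδ : δ = Real.sqrt (1 + 1 / q ^ 2) - 1)
    (Aq : Set (EuclideanSpace ℝ (Fin d)))
    (hAq : Aq = ⋂ B ∈ {B : Matrix (Fin d) (Fin d) ℝ |
        B.det ≠ 0 ∧ X ⊆ Ellip B ∧ condNum B ≤ q * (R / r)}, Ellip B) :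
    (1 + δ)⁻¹ • Aq ⊆ X ∧ X ⊆ Aq := by
  have h2q : (0:ℝ) ≤ 1 + 1 / q ^ 2 := by positivity
  have hδ1 : 1 + δ = Real.sqrt (1 + 1 / q ^ 2) := by rw [hδ]; ring
  have hδsq : (1 + δ) ^ 2 = 1 + 1 / q ^ 2 := by
    rw [hδ1, Real.sq_sqrt h2q]
  have hq2nn : (0:ℝ) ≤ 1 / q ^ 2 := by positivity
  have h1δ : 0 < 1 + δ := by
    have h0 : Real.sqrt 1 ≤ Real.sqrt (1 + 1 / q ^ 2) :=
      Real.sqrt_le_sqrt (by linarith)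
    rw [Real.sqrt_one] at h0
    rw [hδ1]
    linarith
  -- X ⊆ Aq is immediate
  have hXAq : X ⊆ Aq := by
    rw [hAq]
    intro x hx
    simp only [Set.mem_iInter]
    intro B hB
    exact hB.2.1 hx
  refine ⟨?_, hXAq⟩
  -- r > 0
  have hrpos : 0 < r := by
    obtain ⟨x₁, hx₁⟩ := hXint
    have hx₁' : -x₁ ∈ interior X := by
      obtain ⟨U, hUX, hUopen, hxU⟩ := mem_interior.mp hx₁
      refine mem_interior.mpr ⟨-U, ?_, hUopen.neg, by simpa using hxU⟩
      intro w hw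
      rw [hXsymm]
      exact Set.mem_neg.mpr (hUX hw)
    have h0int : (0 : EuclideanSpace ℝ (Fin d)) ∈ interior X := by
      have hm := hXconv.interior hx₁ hx₁' (by norm_num : (0:ℝ) ≤ 1/2)
        (by norm_num : (0:ℝ) ≤ 1/2) (by norm_num)
      have : (1/2 : ℝ) • x₁ + (1/2 : ℝ) • (-x₁) = 0 := by module
      rwa [this] at hm
    obtain ⟨ε, hε, hball⟩ := Metric.mem_nhds_iff.mp (mem_interior_iff_mem_nhds.mp h0int)
    have hsub : Metric.closedBall (0 : EuclideanSpace ℝ (Fin d)) (ε/2) ⊆ X :=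
      (Metric.closedBall_subset_ball (by linarith)).trans hball
    have := hr.2 hsub
    linarith
  have h0X : (0 : EuclideanSpace ℝ (Fin d)) ∈ X :=
    hr.1 (Metric.mem_closedBall_self hrpos.le)
  intro w hw
  obtain ⟨a, haq, rfl⟩ := hw
  by_contra hy
  set y := (1 + δ)⁻¹ • a with hydef
  -- separation
  obtain ⟨f, c, hfX, hfy⟩ := geometric_hahn_banach_closed_point hXconv hXcomp.isClosed hy
  set v := (InnerProductSpace.toDual ℝ (EuclideanSpace ℝ (Fin d))).symm f with hvdef
  have hvf : ∀ x, ⟪v, x⟫ = f x := fun x => InnerProductSpace.toDual_symm_apply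
  have hvne : v ≠ 0 := by
    intro h0
    have h1 : f 0 < c := hfX 0 h0X
    have h2 : ⟪v, y⟫ = f y := hvf y
    rw [h0] at h2
    simp at h2
    have := hfy
    rw [← h2] at this
    simp at h1
    linarith
  set u := ‖v‖⁻¹ • v with hudef
  have hu : ‖u‖ = 1 := norm_smul_inv_norm hvne
  have hvpos : 0 < ‖v‖⁻¹ := inv_pos.mpr (norm_pos_iff.mpr hvne)
  have husep : ∀ x ∈ X, ⟪u, x⟫ < ⟪u, y⟫ := by
    intro x hx
    have h1 : ⟪u, x⟫ = ‖v‖⁻¹ * f x := by rw [hudef, real_inner_smul_left, hvf]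
    have h2 : ⟪u, y⟫ = ‖v‖⁻¹ * f y := by rw [hudef, real_inner_smul_left, hvf]
    rw [h1, h2]
    exact mul_lt_mul_of_pos_left ((hfX x hx).trans hfy) hvpos
  -- the maximum of ⟪u, ·⟫ on X
  obtain ⟨x₀, hx₀X, hx₀max⟩ := hXcomp.exists_isMaxOn ⟨0, h0X⟩
    ((continuous_const.inner continuous_id).continuousOn :
      ContinuousOn (fun x => ⟪u, x⟫) X)
  set h : ℝ := ⟪u, x₀⟫ with hhdef
  have hmax : ∀ x ∈ X, ⟪u, x⟫ ≤ h := fun x hx => hx₀max hx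
  have habs : ∀ x ∈ X, |⟪u, x⟫| ≤ h := by
    intro x hx
    have hneg : -x ∈ X := by
      rw [hXsymm]; simpa [Set.mem_neg] using hx
    have h1 := hmax _ hneg
    rw [inner_neg_right] at h1
    have h2 := hmax x hx
    rw [abs_le]; constructor <;> linarith
  have hrh : r ≤ h := by
    have hmem : r • u ∈ X := hr.1 (by
      simp [Metric.mem_closedBall, norm_smul, hu, abs_of_nonneg hrpos.le, dist_eq_norm])
    have := hmax _ hmem
    rwa [real_inner_smul_right, real_inner_self_eq_norm_sq, hu, one_pow, mul_one] at this
  have hhpos : 0 < h := lt_of_lt_of_le hrpos hrh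
  have hhR : h ≤ R := by
    have h1 : ⟪u, x₀⟫ ≤ ‖u‖ * ‖x₀‖ := real_inner_le_norm u x₀
    have h2 : ‖x₀‖ ≤ R := by
      have := hR.1 hx₀X
      rwa [Metric.mem_closedBall, dist_zero_right] at this
    rw [hu, one_mul] at h1
    exact h1.trans h2
  have hRpos : 0 < R := lt_of_lt_of_le hhpos hhR
  have hqpos : 0 < q := lt_of_lt_of_le (inv_pos.mpr (div_pos hRpos hrpos)) hq
  have hRh2 : 0 ≤ R ^ 2 - h ^ 2 := sub_nonneg.mpr (sq_le_sq_of_le' hhpos.le hhR)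
  have huy : h < ⟪u, y⟫ := husep x₀ hx₀X
  -- construct the ellipsoid
  set β : ℝ := (1 + δ) * h with hβdef
  set α : ℝ := max β (q * (1 + δ) * Real.sqrt (R ^ 2 - h ^ 2)) with hαdef
  have hβpos : 0 < β := mul_pos h1δ hhpos
  have hβα : β ≤ α := le_max_left _ _
  have hαpos : 0 < α := lt_of_lt_of_le hβpos hβα
  have hαsq : q ^ 2 * (1 + δ) ^ 2 * (R ^ 2 - h ^ 2) ≤ α ^ 2 := by
    have h1 : q * (1 + δ) * Real.sqrt (R ^ 2 - h ^ 2) ≤ α := le_max_right _ _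
    have h2 : (0:ℝ) ≤ q * (1 + δ) * Real.sqrt (R ^ 2 - h ^ 2) := by positivity
    have h3 : (q * (1 + δ) * Real.sqrt (R ^ 2 - h ^ 2)) ^ 2
        = q ^ 2 * (1 + δ) ^ 2 * (R ^ 2 - h ^ 2) := by
      rw [mul_pow, mul_pow, Real.sq_sqrt hRh2]
    calc q ^ 2 * (1 + δ) ^ 2 * (R ^ 2 - h ^ 2)
        = (q * (1 + δ) * Real.sqrt (R ^ 2 - h ^ 2)) ^ 2 := h3.symm
      _ ≤ α ^ 2 := sq_le_sq_of_le' h2 h1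
  have hia : α * α⁻¹ = 1 := mul_inv_cancel₀ hαpos.ne'
  have hib : β * β⁻¹ = 1 := mul_inv_cancel₀ hβpos.ne'
  have hiba : α⁻¹ ≤ β⁻¹ := inv_anti₀ hβpos hβα
  have hianneg : (0:ℝ) ≤ α⁻¹ := by positivity
  have hibpos : (0:ℝ) < β⁻¹ := inv_pos.mpr hβpos
  have hsqinv : α⁻¹ ^ 2 ≤ β⁻¹ ^ 2 := sq_le_sq_of_le' hianneg hiba
  have hsqab : β ^ 2 ≤ α ^ 2 := sq_le_sq_of_le' hβpos.le hβα
  -- the matrix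
  set L := lmap u α⁻¹ (β⁻¹ - α⁻¹) with hLdef
  set M := lmap u α (β - α) with hMdef
  set A := (Matrix.toEuclideanCLM (𝕜 := ℝ) (n := Fin d)).symm L with hAdef
  set A' := (Matrix.toEuclideanCLM (𝕜 := ℝ) (n := Fin d)).symm M with hA'def
  have hAL : Matrix.toEuclideanCLM (𝕜 := ℝ) A = L := StarAlgEquiv.apply_symm_apply _ _
  have hA'M : Matrix.toEuclideanCLM (𝕜 := ℝ) A' = M := StarAlgEquiv.apply_symm_apply _ _
  have hLM : L * M = 1 := by
    ext1 x
    have hc := lmap_lmap hu α⁻¹ (β⁻¹ - α⁻¹) α (β - α) x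
    rw [ContinuousLinearMap.mul_apply]
    rw [hLdef, hMdef, hc]
    have hco : α⁻¹ * (β - α) + (β⁻¹ - α⁻¹) * α + (β⁻¹ - α⁻¹) * (β - α) = 0 := by
      field_simp
      ring
    have hco2 : α⁻¹ * α = 1 := inv_mul_cancel₀ hαpos.ne'
    rw [hco, hco2, lmap_id, ContinuousLinearMap.one_apply]
  have hML : M * L = 1 := by
    ext1 x
    have hc := lmap_lmap hu α (β - α) α⁻¹ (β⁻¹ - α⁻¹) x
    rw [ContinuousLinearMap.mul_apply]
    rw [hLdef, hMdef, hc]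
    have hco : α * (β⁻¹ - α⁻¹) + (β - α) * α⁻¹ + (β - α) * (β⁻¹ - α⁻¹) = 0 := by
      field_simp
      ring
    rw [hco, hia, lmap_id, ContinuousLinearMap.one_apply]
  have hmul : A * A' = 1 := by
    rw [hAdef, hA'def, ← map_mul, hLM, map_one]
  have hdet : A.det ≠ 0 := by
    intro h0
    have := Matrix.det_mul A A'
    rw [hmul, h0, Matrix.det_one, zero_mul] at this
    exact one_ne_zero this
  have hAinv : A⁻¹ = A' := Matrix.inv_eq_right_inv hmul
  -- norm bounds
  have hCS : ∀ x : EuclideanSpace ℝ (Fin d), ⟪u, x⟫ ^ 2 ≤ ‖x‖ ^ 2 := by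
    intro x
    have h1 : |⟪u, x⟫| ≤ ‖u‖ * ‖x‖ := abs_real_inner_le_norm u x
    rw [hu, one_mul] at h1
    exact sq_le_of_abs_le' h1
  have hLnorm : ‖L‖ ≤ β⁻¹ := by
    apply ContinuousLinearMap.opNorm_le_bound _ hibpos.le
    intro x
    have h1 := lmap_norm_sq hu α⁻¹ (β⁻¹ - α⁻¹) x
    have h2 : α⁻¹ + (β⁻¹ - α⁻¹) = β⁻¹ := by ring
    rw [h2] at h1
    have h4 : ‖L x‖ ^ 2 ≤ (β⁻¹ * ‖x‖) ^ 2 := by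
      rw [hLdef, h1]
      exact quad_le1 _ _ _ _ hsqinv (hCS x)
    exact le_of_sq_le_sq' (norm_nonneg _) (mul_nonneg hibpos.le (norm_nonneg x)) h4
  have hMnorm : ‖M‖ ≤ α := by
    apply ContinuousLinearMap.opNorm_le_bound _ hαpos.le
    intro x
    have h1 := lmap_norm_sq hu α (β - α) x
    have h2 : α + (β - α) = β := by ring
    rw [h2] at h1
    have h4 : ‖M x‖ ^ 2 ≤ (α * ‖x‖) ^ 2 := by
      rw [hMdef, h1]
      exact quad_le2 _ _ _ _ hsqab
    exact le_of_sq_le_sq' (norm_nonneg _) (mul_nonneg hαpos.le (norm_nonneg x)) h4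
  -- condition number bound
  have hcond : condNum A ≤ q * (R / r) := by
    have hqRr1 : 1 ≤ q * (R / r) := by
      have h1 : r / R ≤ q := by rwa [inv_div] at hq
      have h2 : (0:ℝ) < R / r := div_pos hRpos hrpos
      have h3 : (R / r)⁻¹ * (R / r) = 1 := inv_mul_cancel₀ h2.ne'
      calc (1:ℝ) = (R / r)⁻¹ * (R / r) := h3.symm
        _ ≤ q * (R / r) := mul_le_mul_of_nonneg_right hq h2.le
    have hαbound : α ≤ q * (R / r) * β := by
      apply max_le
      · calc β = 1 * β := (one_mul β).symm
          _ ≤ q * (R / r) * β := mul_le_mul_of_nonneg_right hqRr1 hβpos.le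
      · have hs : Real.sqrt (R ^ 2 - h ^ 2) ≤ R := by
          have h9 : R ^ 2 - h ^ 2 ≤ R ^ 2 := by nlinarith [sq_nonneg h]
          have h10 := Real.sqrt_le_sqrt h9
          rwa [Real.sqrt_sq hRpos.le] at h10
        have hRrh : R ≤ R / r * h := by
          rw [div_mul_eq_mul_div, le_div_iff₀ hrpos]
          exact mul_le_mul_of_nonneg_left hrh hRpos.le
        have hqδ : (0:ℝ) ≤ q * (1 + δ) := by positivity
        calc q * (1 + δ) * Real.sqrt (R ^ 2 - h ^ 2) ≤ q * (1 + δ) * R :=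
              mul_le_mul_of_nonneg_left hs hqδ
          _ ≤ q * (1 + δ) * (R / r * h) := mul_le_mul_of_nonneg_left hRrh hqδ
          _ = q * (R / r) * ((1 + δ) * h) := by ring
    unfold condNum sMin
    rw [hAinv, div_eq_mul_inv, inv_inv]
    unfold sMax
    rw [hAL, hA'M]
    calc ‖L‖ * ‖M‖ ≤ β⁻¹ * α :=
          mul_le_mul hLnorm hMnorm (norm_nonneg _) hibpos.le
      _ ≤ β⁻¹ * (q * (R / r) * β) := mul_le_mul_of_nonneg_left hαbound hibpos.le
      _ = q * (R / r) * (β * β⁻¹) := by ring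
      _ = q * (R / r) := by rw [hib, mul_one]
  -- X ⊆ Ellip A
  have hXE : X ⊆ Ellip A := by
    intro x hx
    have ht2 : ⟪u, x⟫ ^ 2 ≤ h ^ 2 := sq_le_of_abs_le' (habs x hx)
    have hxR : ‖x‖ ≤ R := by
      have := hR.1 hx
      rwa [Metric.mem_closedBall, dist_zero_right] at this
    have hn1 := lmap_norm_sq hu α⁻¹ (β⁻¹ - α⁻¹) x
    have h2 : α⁻¹ + (β⁻¹ - α⁻¹) = β⁻¹ := by ring
    rw [h2] at hn1
    -- key inequality
    have key : (α⁻¹) ^ 2 * (‖x‖ ^ 2 - ⟪u, x⟫ ^ 2) + (β⁻¹) ^ 2 * ⟪u, x⟫ ^ 2 ≤ 1 := by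
      have step1 : (α⁻¹) ^ 2 * (‖x‖ ^ 2 - ⟪u, x⟫ ^ 2) + (β⁻¹) ^ 2 * ⟪u, x⟫ ^ 2
          ≤ (α⁻¹) ^ 2 * (R ^ 2 - h ^ 2) + (β⁻¹) ^ 2 * h ^ 2 :=
        quad_mono _ _ _ _ _ _ hsqinv ht2 hxR (norm_nonneg x)
      have step2 : (α⁻¹) ^ 2 * (R ^ 2 - h ^ 2) ≤ 1 / (q ^ 2 * (1 + δ) ^ 2) := by
        have h5 : (α⁻¹) ^ 2 * (q ^ 2 * (1 + δ) ^ 2 * (R ^ 2 - h ^ 2)) ≤ (α⁻¹) ^ 2 * α ^ 2 :=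
          mul_le_mul_of_nonneg_left hαsq (by positivity)
        have h6 : (α⁻¹) ^ 2 * α ^ 2 = 1 := by
          rw [← mul_pow, inv_mul_cancel₀ hαpos.ne', one_pow]
        rw [h6] at h5
        rw [le_div_iff₀ (mul_pos (pow_pos hqpos 2) (pow_pos h1δ 2))]
        calc (α⁻¹) ^ 2 * (R ^ 2 - h ^ 2) * (q ^ 2 * (1 + δ) ^ 2)
            = (α⁻¹) ^ 2 * (q ^ 2 * (1 + δ) ^ 2 * (R ^ 2 - h ^ 2)) := by ring
          _ ≤ 1 := h5
      have step3 : (β⁻¹) ^ 2 * h ^ 2 = 1 / (1 + δ) ^ 2 := by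
        rw [hβdef, mul_inv]
        field_simp
      have step4 : 1 / (q ^ 2 * (1 + δ) ^ 2) + 1 / (1 + δ) ^ 2 = 1 := by
        rw [hδsq]
        field_simp
        ring
      linarith
    have hsq1 : ‖L x‖ ^ 2 ≤ 1 := by rw [hLdef, hn1]; linarith
    have hfin : ‖L x‖ ≤ 1 :=
      le_of_sq_le_sq' (norm_nonneg _) zero_le_one (by rw [one_pow]; exact hsq1)
    show ‖mulVecE A x‖ ≤ 1
    rw [mulVecE_eq_clm, hAL]
    exact hfin
  -- a is in Ellip A
  have haE : a ∈ Ellip A := by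
    rw [hAq] at haq
    exact Set.mem_iInter₂.mp haq A ⟨hdet, hXE, hcond⟩
  -- but a is outside Ellip A : contradiction
  have hay : a = (1 + δ) • y := by
    rw [hydef, smul_inv_smul₀ h1δ.ne']
  have hua : β < ⟪u, a⟫ := by
    rw [hay, real_inner_smul_right, hβdef]
    exact mul_lt_mul_of_pos_left huy h1δ
  have hno : (1:ℝ) < ‖L a‖ ^ 2 := by
    have hn1 := lmap_norm_sq hu α⁻¹ (β⁻¹ - α⁻¹) a
    have h2 : α⁻¹ + (β⁻¹ - α⁻¹) = β⁻¹ := by ring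
    rw [h2] at hn1
    have h3 := hCS a
    have h4 : 1 < (β⁻¹) ^ 2 * ⟪u, a⟫ ^ 2 := by
      have hib' : β⁻¹ * β = 1 := inv_mul_cancel₀ hβpos.ne'
      have h5 : 1 < β⁻¹ * ⟪u, a⟫ := by
        have h6 := mul_lt_mul_of_pos_left hua hibpos
        rwa [hib'] at h6
      have h7 := one_lt_sq' h5
      rw [mul_pow] at h7
      linarith
    have h8 : (0:ℝ) ≤ (α⁻¹) ^ 2 * (‖a‖ ^ 2 - ⟪u, a⟫ ^ 2) :=
      mul_nonneg (sq_nonneg _) (sub_nonneg.mpr h3)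
    rw [hLdef, hn1]
    linarith
  have haE' : ‖L a‖ ≤ 1 := by
    have h0 := haE
    rwa [Ellip, Set.mem_setOf_eq, mulVecE_eq_clm, hAL] at h0
  have hsq2 : ‖L a‖ ^ 2 ≤ 1 := sq_le_one' (norm_nonneg _) haE'
  linarith
end
end

section
/- Let A ∈ ℝ^{d×d} be nonsingular and x ∈ ℝ^d with ‖A x‖ > 1, and let Â be the update matrix for (A, x). Then the ellipsoid E_{ÂA} determined by ÂA contains E_A, contains x (indeed ‖ÂA x‖ = 1), and has minimum volume among all origin-centered ellipsoids containing E_A and x: for every nonsingular B ∈ ℝ^{d×d} with E_A ⊆ E_B and ‖B x‖ ≤ 1, one has |det B| ≤ |det(ÂA)|. -/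
noncomputable section

open scoped Pointwise

/-- Squared Frobenius norm. -/
def frobSq {d : ℕ} (A : Matrix (Fin d) (Fin d) ℝ) : ℝ :=
  ∑ i, ∑ j, (A i j) ^ 2

/-- Minimum-volume-ellipsoid update matrix `Â` for `(A, x)`. -/
def updateMatrix {d : ℕ} (A : Matrix (Fin d) (Fin d) ℝ) (x : EuclideanSpace ℝ (Fin d)) :
    Matrix (Fin d) (Fin d) ℝ :=
  1 - ((1 - (‖mulVecE A x‖)⁻¹) / ‖mulVecE A x‖ ^ 2) •
        Matrix.vecMulVec (mulVecE A x) (mulVecE A x)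

/-- Potential function `Φ_J(A)`. -/
def potential {d : ℕ} (J A : Matrix (Fin d) (Fin d) ℝ) : ℝ :=
  frobSq (J * A⁻¹) - 2 * Real.log |(J * A⁻¹).det|

open Matrix in
theorem vecMulVec_mulVec' {d : ℕ} (u v w : Fin d → ℝ) :
    (Matrix.vecMulVec u v).mulVec w = (v ⬝ᵥ w) • u := by
  funext i
  simp only [Matrix.mulVec, Matrix.vecMulVec_apply, dotProduct, Pi.smul_apply,
    smul_eq_mul, Finset.sum_mul, Finset.mul_sum]
  exact Finset.sum_congr rfl fun j _ => by ring

open Matrix in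
theorem det_one_sub_smul_vecMulVec {d : ℕ} (u v : Fin d → ℝ) (c : ℝ) :
    (1 - c • Matrix.vecMulVec u v).det = 1 - c * (v ⬝ᵥ u) := by
  have h : (-c) • Matrix.vecMulVec u v = Matrix.vecMulVec ((-c) • u) v := by
    funext i j; simp [Matrix.vecMulVec_apply]; ring
  rw [sub_eq_add_neg, ← neg_smul, h, Matrix.vecMulVec_eq (Fin 1),
    Matrix.det_one_add_replicateCol_mul_replicateRow]
  simp only [dotProduct, Pi.smul_apply, smul_eq_mul, neg_mul, sub_eq_add_neg,
    Finset.mul_sum, ← Finset.sum_neg_distrib]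
  congr 1
  exact Finset.sum_congr rfl fun j _ => by ring

open Matrix RealInnerProductSpace in
theorem inner_eq_dot' {d : ℕ} (u v : EuclideanSpace ℝ (Fin d)) :
    ⟪u, v⟫ = u ⬝ᵥ v := by
  simp [PiLp.inner_apply, dotProduct, RCLike.inner_apply, mul_comm]

open Matrix in
theorem norm_sq_eq_dot' {d : ℕ} (u : EuclideanSpace ℝ (Fin d)) :
    ‖u‖ ^ 2 = u ⬝ᵥ u := by
  rw [← real_inner_self_eq_norm_sq]
  exact inner_eq_dot' u u

set_option maxHeartbeats 1000000
open Matrix RealInnerProductSpace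
/-- The minimum-volume-ellipsoid update: `E_{ÂA}` contains `E_A`, contains `x` (with
`‖ÂA x‖ = 1`), and has minimum volume among all origin-centered ellipsoids containing
`E_A` and `x`. -/
theorem stmt2 (d : ℕ) (A : Matrix (Fin d) (Fin d) ℝ) (hA : A.det ≠ 0)
    (x : EuclideanSpace ℝ (Fin d)) (hx : 1 < ‖mulVecE A x‖) :
    Ellip A ⊆ Ellip (updateMatrix A x * A) ∧
    x ∈ Ellip (updateMatrix A x * A) ∧
    ‖mulVecE (updateMatrix A x * A) x‖ = 1 ∧
    ∀ B : Matrix (Fin d) (Fin d) ℝ, B.det ≠ 0 → Ellip A ⊆ Ellip B →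
      ‖mulVecE B x‖ ≤ 1 → |B.det| ≤ |(updateMatrix A x * A).det| := by
  set y : EuclideanSpace ℝ (Fin d) := mulVecE A x with hy
  set r : ℝ := ‖y‖ with hrdef
  have hr1 : 1 < r := hx
  have hr0 : 0 < r := lt_trans one_pos hr1
  set c : ℝ := (1 - r⁻¹) / r ^ 2 with hc
  have hyy : (y : Fin d → ℝ) ⬝ᵥ y = r ^ 2 := (norm_sq_eq_dot' y).symm
  have hcr2 : c * r ^ 2 = 1 - r⁻¹ := by
    rw [hc, div_mul_cancel₀ _ (pow_ne_zero 2 hr0.ne')]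
  have hrinv : r⁻¹ < 1 := inv_lt_one_of_one_lt₀ hr1
  have hcpos : 0 < c := div_pos (by linarith) (by positivity)
  -- action of the update matrix
  have hupd : ∀ v : EuclideanSpace ℝ (Fin d),
      mulVecE (updateMatrix A x) v = v - (c * ((y : Fin d → ℝ) ⬝ᵥ v)) • y := by
    intro v
    show WithLp.toLp 2 ((updateMatrix A x).mulVec v) = v - (c * ((y : Fin d → ℝ) ⬝ᵥ v)) • y
    rw [updateMatrix, Matrix.sub_mulVec, Matrix.one_mulVec, Matrix.smul_mulVec,
      vecMulVec_mulVec']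
    rw [smul_smul]
    rfl
  -- squared norm after update
  have hnormsq : ∀ v : EuclideanSpace ℝ (Fin d),
      ‖mulVecE (updateMatrix A x) v‖ ^ 2
        = ‖v‖ ^ 2 - c * (2 - c * r ^ 2) * ((y : Fin d → ℝ) ⬝ᵥ v) ^ 2 := by
    intro v
    rw [hupd v]
    rw [norm_sub_sq_real, real_inner_smul_right, norm_smul, mul_pow, Real.norm_eq_abs, sq_abs,
      inner_eq_dot' v y, dotProduct_comm (v : Fin d → ℝ) y, ← hrdef]
    ring
  -- the three easy parts
  have part3 : ‖mulVecE (updateMatrix A x * A) x‖ = 1 := by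
    have hmul : mulVecE (updateMatrix A x * A) x = mulVecE (updateMatrix A x) y := by
      show WithLp.toLp 2 ((updateMatrix A x * A).mulVec x) = WithLp.toLp 2 ((updateMatrix A x).mulVec (A.mulVec x))
      rw [← Matrix.mulVec_mulVec]
    rw [hmul, hupd y, hyy, hcr2]
    have : y - (1 - r⁻¹) • y = r⁻¹ • y := by
      rw [sub_smul, one_smul]; abel
    rw [this, norm_smul, ← hrdef, Real.norm_eq_abs, abs_of_pos (by positivity)]
    field_simp
  have part1 : Ellip A ⊆ Ellip (updateMatrix A x * A) := by
    intro z hz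
    have hz1 : ‖mulVecE A z‖ ≤ 1 := hz
    have hmul : mulVecE (updateMatrix A x * A) z = mulVecE (updateMatrix A x) (mulVecE A z) := by
      show WithLp.toLp 2 ((updateMatrix A x * A).mulVec z) = WithLp.toLp 2 ((updateMatrix A x).mulVec (A.mulVec z))
      rw [← Matrix.mulVec_mulVec]
    show ‖mulVecE (updateMatrix A x * A) z‖ ≤ 1
    rw [hmul]
    have hrip : (0:ℝ) < r⁻¹ := inv_pos.mpr hr0
    have h2 : 0 < 2 - c * r ^ 2 := by rw [hcr2]; linarith
    have hsq := hnormsq (mulVecE A z)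
    have hle : ‖mulVecE (updateMatrix A x) (mulVecE A z)‖ ^ 2 ≤ ‖mulVecE A z‖ ^ 2 := by
      rw [hsq]
      nlinarith [mul_nonneg (mul_nonneg hcpos.le h2.le)
        (sq_nonneg ((y : Fin d → ℝ) ⬝ᵥ (mulVecE A z)))]
    nlinarith [norm_nonneg (mulVecE (updateMatrix A x) (mulVecE A z)), norm_nonneg (mulVecE A z)]
  -- determinant of the update
  have hdet : (updateMatrix A x).det = r⁻¹ := by
    rw [updateMatrix, det_one_sub_smul_vecMulVec, hyy, hcr2]
    ring
  refine ⟨part1, by show ‖mulVecE (updateMatrix A x * A) x‖ ≤ 1; rw [part3], part3, ?_⟩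
  -- optimality
  intro B hB hsub hBx
  have hAunit : IsUnit A.det := isUnit_iff_ne_zero.mpr hA
  set C : Matrix (Fin d) (Fin d) ℝ := B * A⁻¹ with hCdef
  have hCA : C * A = B := by
    rw [hCdef, Matrix.mul_assoc, Matrix.nonsing_inv_mul A hAunit, Matrix.mul_one]
  -- C is a contraction
  have hCop : ∀ w : EuclideanSpace ℝ (Fin d), ‖mulVecE C w‖ ≤ ‖w‖ := by
    intro w
    rcases eq_or_ne w 0 with h0 | h0
    · subst h0
      have h : mulVecE C (0 : EuclideanSpace ℝ (Fin d)) = (0 : EuclideanSpace ℝ (Fin d)) :=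
        by simp [mulVecE]
      rw [h]
    · have hwpos : 0 < ‖w‖ := norm_pos_iff.mpr h0
      set w' : EuclideanSpace ℝ (Fin d) := (‖w‖)⁻¹ • w with hw'
      set z : EuclideanSpace ℝ (Fin d) := mulVecE A⁻¹ w' with hz
      have hAz : mulVecE A z = w' := by
        show WithLp.toLp 2 (A.mulVec (A⁻¹.mulVec w')) = w'
        rw [Matrix.mulVec_mulVec, Matrix.mul_nonsing_inv A hAunit, Matrix.one_mulVec]
      have hzmem : z ∈ Ellip A := by
        show ‖mulVecE A z‖ ≤ 1
        rw [hAz, hw', norm_smul, Real.norm_eq_abs, abs_of_pos (by positivity)]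
        rw [inv_mul_cancel₀ (ne_of_gt hwpos)]
      have hBz : ‖mulVecE B z‖ ≤ 1 := hsub hzmem
      have hCB : mulVecE B z = mulVecE C w' := by
        show WithLp.toLp 2 (B.mulVec z) = WithLp.toLp 2 (C.mulVec w')
        rw [← hCA, ← Matrix.mulVec_mulVec]
        exact congrArg (fun u => WithLp.toLp 2 (C.mulVec u)) (congrArg WithLp.ofLp hAz)
      have hCw' : mulVecE C w' = (‖w‖)⁻¹ • mulVecE C w := by
        show WithLp.toLp 2 (C.mulVec ((‖w‖)⁻¹ • (w : Fin d → ℝ))) = (‖w‖)⁻¹ • WithLp.toLp 2 (C.mulVec w)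
        rw [Matrix.mulVec_smul]
        rfl
      rw [hCB, hCw'] at hBz
      rw [norm_smul, Real.norm_eq_abs, abs_of_pos (by positivity)] at hBz
      calc ‖mulVecE C w‖ = ‖w‖ * ((‖w‖)⁻¹ * ‖mulVecE C w‖) := by field_simp
        _ ≤ ‖w‖ * 1 := by exact mul_le_mul_of_nonneg_left hBz (le_of_lt hwpos)
        _ = ‖w‖ := mul_one _
  have hCy : ‖mulVecE C y‖ ≤ 1 := by
    have : mulVecE C y = mulVecE B x := by
      show WithLp.toLp 2 (C.mulVec (A.mulVec x)) = WithLp.toLp 2 (B.mulVec x)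
      rw [Matrix.mulVec_mulVec, hCA]
    rw [this]; exact hBx
  -- the symmetric matrix M = Cᴴ C
  set M : Matrix (Fin d) (Fin d) ℝ := Cᴴ * C with hMdef
  have hMpsd : M.PosSemidef := Matrix.posSemidef_conjTranspose_mul_self C
  have hM : M.IsHermitian := hMpsd.isHermitian
  -- quadratic form identity
  have hquad : ∀ w : Fin d → ℝ, w ⬝ᵥ (M *ᵥ w) = (C *ᵥ w) ⬝ᵥ (C *ᵥ w) := by
    intro w
    rw [hMdef, ← Matrix.mulVec_mulVec, Matrix.dotProduct_mulVec w Cᴴ,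
      Matrix.vecMul_conjTranspose]
    simp
  have hquadE : ∀ w : EuclideanSpace ℝ (Fin d),
      (w : Fin d → ℝ) ⬝ᵥ (M *ᵥ w) = ‖mulVecE C w‖ ^ 2 := by
    intro w
    rw [hquad, norm_sq_eq_dot']
    simp [mulVecE]
  -- eigenvalues
  set lam := hM.eigenvalues with hlam
  have hlam_nonneg : ∀ i, 0 ≤ lam i := fun i => hMpsd.eigenvalues_nonneg i
  have hlam_le_one : ∀ i, lam i ≤ 1 := by
    intro i
    set v : EuclideanSpace ℝ (Fin d) := hM.eigenvectorBasis i with hv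
    have hnv : ‖v‖ = 1 := (hM.eigenvectorBasis.orthonormal).1 i
    have heig : M *ᵥ (v : Fin d → ℝ) = lam i • (v : Fin d → ℝ) := hM.mulVec_eigenvectorBasis i
    have h1 : (v : Fin d → ℝ) ⬝ᵥ (M *ᵥ v) = lam i := by
      rw [heig, dotProduct_smul, smul_eq_mul, ← norm_sq_eq_dot' v, hnv]
      norm_num
    have h2 := hquadE v
    have h3 : ‖mulVecE C v‖ ≤ 1 := by
      calc ‖mulVecE C v‖ ≤ ‖v‖ := hCop v
        _ = 1 := hnv
    nlinarith [norm_nonneg (mulVecE C v)]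
  -- some eigenvalue is at most r⁻²
  have hexists : ∃ i, lam i ≤ (r ^ 2)⁻¹ := by
    by_contra hcon
    push_neg at hcon
    set b := hM.eigenvectorBasis with hb
    have hMT : Mᵀ = M := by
      have heq : Mᴴ = M := hM
      funext i j
      conv_rhs => rw [← heq]
      simp [Matrix.conjTranspose_apply]
    have hMy : ∀ i, ⟪(b i : EuclideanSpace ℝ (Fin d)), mulVecE M y⟫ = lam i * ⟪b i, y⟫ := by
      intro i
      rw [inner_eq_dot', inner_eq_dot']
      show ((b i : Fin d → ℝ)) ⬝ᵥ (M *ᵥ (y : Fin d → ℝ)) = lam i * (((b i : Fin d → ℝ)) ⬝ᵥ y)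
      have heig : M *ᵥ ((b i : Fin d → ℝ)) = lam i • ((b i : Fin d → ℝ)) :=
        hM.mulVec_eigenvectorBasis i
      rw [Matrix.dotProduct_mulVec]
      conv_lhs => rw [← hMT, Matrix.vecMul_transpose, heig, smul_dotProduct]
      simp
    have hexp : (y : Fin d → ℝ) ⬝ᵥ (M *ᵥ y) = ∑ i, lam i * (⟪b i, y⟫) ^ 2 := by
      calc (y : Fin d → ℝ) ⬝ᵥ (M *ᵥ y) = ⟪y, mulVecE M y⟫ := (inner_eq_dot' y (mulVecE M y)).symm
        _ = ∑ i, ⟪y, b i⟫ * ⟪b i, mulVecE M y⟫ := (b.sum_inner_mul_inner y (mulVecE M y)).symm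
        _ = ∑ i, lam i * (⟪b i, y⟫) ^ 2 := by
            refine Finset.sum_congr rfl fun i _ => ?_
            rw [hMy i, real_inner_comm y (b i)]
            ring
    have hsum : ∑ i, (⟪b i, y⟫) ^ 2 = r ^ 2 := by
      calc ∑ i, (⟪b i, y⟫) ^ 2 = ∑ i, ⟪y, b i⟫ * ⟪b i, y⟫ := by
            refine Finset.sum_congr rfl fun i _ => ?_
            rw [real_inner_comm y (b i)]
            ring
        _ = ⟪y, y⟫ := b.sum_inner_mul_inner y y
        _ = r ^ 2 := real_inner_self_eq_norm_sq y
    have hne : ∃ i, (⟪b i, y⟫) ^ 2 ≠ 0 := by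
      by_contra hall
      push_neg at hall
      have : (∑ i, (⟪b i, y⟫) ^ 2) = 0 := Finset.sum_eq_zero fun i _ => hall i
      rw [hsum] at this
      nlinarith
    obtain ⟨i0, hi0⟩ := hne
    have hi0' : 0 < (⟪b i0, y⟫) ^ 2 := lt_of_le_of_ne (sq_nonneg _) (Ne.symm hi0)
    have hlt : ∑ i, (r ^ 2)⁻¹ * (⟪b i, y⟫) ^ 2 < ∑ i, lam i * (⟪b i, y⟫) ^ 2 := by
      apply Finset.sum_lt_sum
      · intro i _
        exact mul_le_mul_of_nonneg_right (le_of_lt (hcon i)) (sq_nonneg _)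
      · exact ⟨i0, Finset.mem_univ _, by nlinarith [hcon i0]⟩
    rw [← Finset.mul_sum, hsum] at hlt
    have h1 : (r ^ 2)⁻¹ * r ^ 2 = 1 := inv_mul_cancel₀ (by positivity)
    rw [h1, ← hexp, hquadE] at hlt
    nlinarith [hCy, norm_nonneg (mulVecE C y)]
  obtain ⟨i, hi⟩ := hexists
  -- determinant bound
  have hdetM : M.det = (∏ j, lam j) := by
    have := hM.det_eq_prod_eigenvalues
    rw [this]
    norm_num
    rfl
  have hprod_le : (∏ j, lam j) ≤ lam i := by
    rw [← Finset.prod_erase_mul Finset.univ lam (Finset.mem_univ i)]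
    have hle1 : (∏ j ∈ Finset.univ.erase i, lam j) ≤ 1 :=
      Finset.prod_le_one (fun j _ => hlam_nonneg j) (fun j _ => hlam_le_one j)
    have hge0 : 0 ≤ (∏ j ∈ Finset.univ.erase i, lam j) :=
      Finset.prod_nonneg fun j _ => hlam_nonneg j
    nlinarith [hlam_nonneg i]
  have hdetMC : M.det = C.det ^ 2 := by
    rw [hMdef, Matrix.det_mul, Matrix.det_conjTranspose]
    simp [sq]
  have hdetC : |C.det| ≤ r⁻¹ := by
    have h1 : C.det ^ 2 ≤ (r ^ 2)⁻¹ := by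
      rw [← hdetMC, hdetM]; exact le_trans hprod_le hi
    have h2 : (r⁻¹) ^ 2 = (r ^ 2)⁻¹ := by rw [inv_pow]
    nlinarith [abs_nonneg C.det, sq_abs C.det, inv_pos.mpr hr0]
  -- conclude
  have hdetB : B.det = C.det * A.det := by
    rw [← hCA, Matrix.det_mul]
  have hdetfin : (updateMatrix A x * A).det = r⁻¹ * A.det := by
    rw [Matrix.det_mul, hdet]
  rw [hdetB, hdetfin, abs_mul, abs_mul, abs_of_pos (inv_pos.mpr hr0)]
  exact mul_le_mul_of_nonneg_right hdetC (abs_nonneg _)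
end
end

section
/- Let B ∈ ℝ^{d×d} be a matrix whose operator norm is at most 1 (equivalently, all singular values of B are at most 1), and let v ∈ ℝ^d with ‖v‖ ≥ 1 and ‖B v‖ ≤ 1. Then |det B| ≤ 1/‖v‖. -/
noncomputable section

open scoped Pointwise

open Matrix in
/-- If all singular values of `B` are at most `1`, `‖v‖ ≥ 1` and `‖B v‖ ≤ 1`, then
`|det B| ≤ 1 / ‖v‖`. -/
theorem stmt3 (d : ℕ) (B : Matrix (Fin d) (Fin d) ℝ) (hB : sMax B ≤ 1)
    (v : EuclideanSpace ℝ (Fin d)) (hv : 1 ≤ ‖v‖) (hBv : ‖mulVecE B v‖ ≤ 1) :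
    |B.det| ≤ 1 / ‖v‖ := by
  rcases Nat.eq_zero_or_pos d with rfl | hd
  · have hv0 : v = 0 := Subsingleton.elim v 0
    rw [hv0, norm_zero] at hv; linarith
  have hv0 : (0:ℝ) < ‖v‖ := lt_of_lt_of_le one_pos hv
  set M := Matrix.transpose B * B with hMdef
  have hM : M.IsHermitian := by have := Matrix.isHermitian_conjTranspose_mul_self B; rwa [Matrix.conjTranspose_eq_transpose_of_trivial] at this
  set b := hM.eigenvectorBasis with hb
  set μ := hM.eigenvalues with hμdef
  have hWe : ∀ x : EuclideanSpace ℝ (Fin d),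
      WithLp.equiv 2 ((i : Fin d) → ℝ) x = x := fun _ => rfl
  have hinner : ∀ x y : EuclideanSpace ℝ (Fin d),
      (inner ℝ x y : ℝ) = dotProduct (x : Fin d → ℝ) y := by
    intro x y
    simp [EuclideanSpace.inner_eq_star_dotProduct]; exact dotProduct_comm _ _
  have hop : ∀ x : EuclideanSpace ℝ (Fin d), ‖mulVecE B x‖ ≤ sMax B * ‖x‖ :=
    fun x => (Matrix.toEuclideanCLM (𝕜 := ℝ) B).le_opNorm x
  -- quadratic form identity
  have hquad : ∀ x : EuclideanSpace ℝ (Fin d),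
      (inner ℝ x (mulVecE M x) : ℝ) = ‖mulVecE B x‖ ^ 2 := by
    intro x
    rw [hinner]
    have h1 : mulVecE M x = Matrix.transpose B *ᵥ (B *ᵥ (x : Fin d → ℝ)) := by
      show M *ᵥ (x : Fin d → ℝ) = _
      rw [hMdef, Matrix.mulVec_mulVec]
    rw [h1, Matrix.dotProduct_mulVec, Matrix.vecMul_transpose]
    have h2 := hinner (mulVecE B x) (mulVecE B x)
    rw [real_inner_self_eq_norm_sq] at h2
    exact h2.symm
  -- eigen equation in mulVecE form
  have heig : ∀ j, mulVecE M (b j) = μ j • (b j) := by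
    intro j
    have := hM.mulVec_eigenvectorBasis j
    show WithLp.toLp 2 (M *ᵥ _) = _
    rw [this]; rfl
  have hμ_eq : ∀ j, μ j = ‖mulVecE B (b j)‖ ^ 2 := by
    intro j
    rw [← hquad (b j), heig j, inner_smul_right, real_inner_self_eq_norm_sq,
      b.orthonormal.1 j]
    norm_num
  have hμ_nonneg : ∀ j, 0 ≤ μ j := fun j => (hμ_eq j) ▸ sq_nonneg _
  have hμ_le_one : ∀ j, μ j ≤ 1 := by
    intro j
    rw [hμ_eq j]
    have h1 : ‖mulVecE B (b j)‖ ≤ 1 := by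
      have := hop (b j)
      rw [b.orthonormal.1 j, mul_one] at this
      linarith
    exact pow_le_one₀ (norm_nonneg _) h1
  -- Parseval
  have hpar : ∑ j, (inner (𝕜 := ℝ) (b j) v) ^ 2 = ‖v‖ ^ 2 := by
    have h := b.sum_inner_mul_inner v v
    rw [real_inner_self_eq_norm_sq] at h
    rw [← h]
    refine Finset.sum_congr rfl fun j _ => ?_
    rw [real_inner_comm (b j) v]; ring
  -- symmetry of M as bilinear form
  have hsymm : ∀ x y : EuclideanSpace ℝ (Fin d),
      (inner ℝ x (mulVecE M y) : ℝ) = inner ℝ (mulVecE M x) y := by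
    intro x y
    have hMs : Matrix.transpose M = M := by
      have h := hM
      rwa [Matrix.IsHermitian, Matrix.conjTranspose_eq_transpose_of_trivial] at h
    rw [hinner, hinner]
    show dotProduct (x : Fin d → ℝ) (M *ᵥ (y : Fin d → ℝ)) =
      dotProduct (M *ᵥ (x : Fin d → ℝ)) (y : Fin d → ℝ)
    rw [Matrix.dotProduct_mulVec]
    congr 1
    conv_lhs => rw [← hMs]
    rw [Matrix.vecMul_transpose]
  -- expansion of the quadratic form
  have hexp : ‖mulVecE B v‖ ^ 2 = ∑ j, μ j * (inner (𝕜 := ℝ) (b j) v) ^ 2 := by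
    rw [← hquad v, ← b.sum_inner_mul_inner v (mulVecE M v)]
    refine Finset.sum_congr rfl fun j _ => ?_
    rw [real_inner_comm v (b j), hsymm (b j) v, heig j, inner_smul_left]
    simp only [RCLike.conj_to_real, conj_trivial]
    simp only [real_inner_comm (b j) v]
    ring
  -- smallest eigenvalue
  obtain ⟨j₀, -, hj₀⟩ := Finset.exists_min_image Finset.univ μ
    (Finset.univ_nonempty_iff.mpr ⟨⟨0, hd⟩⟩)
  have hkey : μ j₀ * ‖v‖ ^ 2 ≤ 1 := by
    have h2 : ∑ j, μ j₀ * (inner (𝕜 := ℝ) (b j) v) ^ 2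
        ≤ ∑ j, μ j * (inner (𝕜 := ℝ) (b j) v) ^ 2 :=
      Finset.sum_le_sum fun j _ =>
        mul_le_mul_of_nonneg_right (hj₀ j (Finset.mem_univ j)) (sq_nonneg _)
    have h3 : ‖mulVecE B v‖ ^ 2 ≤ 1 := pow_le_one₀ (norm_nonneg _) hBv
    calc μ j₀ * ‖v‖ ^ 2 = ∑ j, μ j₀ * (inner (𝕜 := ℝ) (b j) v) ^ 2 := by
          rw [← Finset.mul_sum, hpar]
      _ ≤ ∑ j, μ j * (inner (𝕜 := ℝ) (b j) v) ^ 2 := h2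
      _ = ‖mulVecE B v‖ ^ 2 := hexp.symm
      _ ≤ 1 := h3
  -- determinant
  have hdetM : M.det = B.det ^ 2 := by
    rw [hMdef, Matrix.det_mul, Matrix.det_transpose, sq]
  have hdet : B.det ^ 2 = ∏ j, μ j := by
    have h := hM.det_eq_prod_eigenvalues
    rw [hdetM] at h
    simpa using h
  have hprod : ∏ j, μ j ≤ μ j₀ := by
    rw [← Finset.mul_prod_erase _ _ (Finset.mem_univ j₀)]
    have h1 : ∏ j ∈ Finset.univ.erase j₀, μ j ≤ 1 :=
      Finset.prod_le_one (fun j _ => hμ_nonneg j) (fun j _ => hμ_le_one j)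
    nlinarith [hμ_nonneg j₀,
      Finset.prod_nonneg (fun j (_ : j ∈ Finset.univ.erase j₀) => hμ_nonneg j)]
  have hfin : B.det ^ 2 ≤ (1 / ‖v‖) ^ 2 := by
    rw [hdet, div_pow, one_pow, le_div_iff₀ (by positivity)]
    calc (∏ j, μ j) * ‖v‖ ^ 2 ≤ μ j₀ * ‖v‖ ^ 2 :=
          mul_le_mul_of_nonneg_right hprod (by positivity)
      _ ≤ 1 := hkey
  calc |B.det| = Real.sqrt (B.det ^ 2) := (Real.sqrt_sq_eq_abs _).symm
    _ ≤ Real.sqrt ((1 / ‖v‖) ^ 2) := Real.sqrt_le_sqrt hfin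
    _ = 1 / ‖v‖ := Real.sqrt_sq (by positivity)
end
end

section
/- For every nonsingular matrix M ∈ ℝ^{d×d}, one has σ_max(M)² ≤ (e/(e−1)) · (‖M‖_F² − 2 log|det M|), where σ_max(M) is the largest singular value of M. -/
noncomputable section

open scoped Pointwise

lemma frobSq_nonneg {d : ℕ} (A : Matrix (Fin d) (Fin d) ℝ) : 0 ≤ frobSq A :=
  Finset.sum_nonneg fun _ _ => Finset.sum_nonneg fun _ _ => sq_nonneg _

lemma sMax_sq_le_frobSq {d : ℕ} (M : Matrix (Fin d) (Fin d) ℝ) :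
    sMax M ^ 2 ≤ frobSq M := by
  have hF : 0 ≤ frobSq M := frobSq_nonneg M
  have hle : sMax M ≤ Real.sqrt (frobSq M) := by
    apply ContinuousLinearMap.opNorm_le_bound _ (Real.sqrt_nonneg _)
    intro x
    have h1 : ‖Matrix.toEuclideanCLM (𝕜 := ℝ) M x‖ ^ 2 ≤ frobSq M * ‖x‖ ^ 2 := by
      rw [PiLp.norm_sq_eq_of_L2, PiLp.norm_sq_eq_of_L2]
      have hcoord : ∀ i, (Matrix.toEuclideanCLM (𝕜 := ℝ) M x) i = ∑ j, M i j * x j := by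
        intro i
        rfl
      calc ∑ i, ‖(Matrix.toEuclideanCLM (𝕜 := ℝ) M x) i‖ ^ 2
          = ∑ i, (∑ j, M i j * x j) ^ 2 := by
            simp [hcoord, Real.norm_eq_abs, sq_abs]
        _ ≤ ∑ i, (∑ j, (M i j) ^ 2) * (∑ j, (x j) ^ 2) := by
            apply Finset.sum_le_sum
            intro i _
            exact Finset.sum_mul_sq_le_sq_mul_sq _ _ _
        _ = frobSq M * ∑ j, (x j) ^ 2 := by
            rw [frobSq, Finset.sum_mul]
        _ = frobSq M * ∑ j, ‖x j‖ ^ 2 := by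
            simp [Real.norm_eq_abs, sq_abs]
    calc ‖Matrix.toEuclideanCLM (𝕜 := ℝ) M x‖
        = Real.sqrt (‖Matrix.toEuclideanCLM (𝕜 := ℝ) M x‖ ^ 2) := by
          rw [Real.sqrt_sq (norm_nonneg _)]
      _ ≤ Real.sqrt (frobSq M * ‖x‖ ^ 2) := Real.sqrt_le_sqrt h1
      _ = Real.sqrt (frobSq M) * ‖x‖ := by
          rw [Real.sqrt_mul hF, Real.sqrt_sq (norm_nonneg _)]
  calc sMax M ^ 2 ≤ Real.sqrt (frobSq M) ^ 2 := by
        apply pow_le_pow_left₀ (norm_nonneg _) hle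
    _ = frobSq M := Real.sq_sqrt hF

/-- `σ_max(M)² ≤ (e/(e-1)) · (‖M‖_F² − 2 log |det M|)` for nonsingular `M`. -/
theorem stmt4 (d : ℕ) (M : Matrix (Fin d) (Fin d) ℝ) (hM : M.det ≠ 0) :
    sMax M ^ 2 ≤
      Real.exp 1 / (Real.exp 1 - 1) * (frobSq M - 2 * Real.log |M.det|) := by
  classical
  set S := M.conjTranspose * M with hSdef
  have hS : S.PosSemidef := Matrix.posSemidef_conjTranspose_mul_self M
  have hHerm := hS.1
  set μ := hHerm.eigenvalues with hμ
  have htr : S.trace = ∑ i, μ i := by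
    simpa using hHerm.trace_eq_sum_eigenvalues
  have hdet : S.det = ∏ i, μ i := by
    simpa using hHerm.det_eq_prod_eigenvalues
  have hdetS : S.det = M.det ^ 2 := by
    rw [hSdef]
    simp [Matrix.det_mul, Matrix.det_conjTranspose, sq]
  have hμpos : ∀ i, 0 < μ i := by
    intro i
    rcases (hS.eigenvalues_nonneg i).lt_or_eq with h | h
    · exact h
    · exfalso
      apply hM
      have : S.det = 0 := by
        rw [hdet]
        exact Finset.prod_eq_zero (Finset.mem_univ i) h.symm
      rw [hdetS] at this
      exact pow_eq_zero_iff (by norm_num) |>.mp this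
  have hfs : frobSq M = S.trace := by
    rw [frobSq, Matrix.trace]
    rw [Finset.sum_comm]
    apply Finset.sum_congr rfl
    intro j _
    simp [Matrix.diag, hSdef, Matrix.mul_apply, Matrix.conjTranspose_apply, sq]
  have hlog : 2 * Real.log |M.det| = Real.log S.det := by
    rw [hdetS, Real.log_pow, Real.log_abs]
    push_cast
    ring
  have hlogle : Real.log S.det ≤ S.trace / Real.exp 1 := by
    rw [hdet, Real.log_prod (fun i _ => (hμpos i).ne'), htr, Finset.sum_div]
    apply Finset.sum_le_sum
    intro i _
    have h := Real.log_le_sub_one_of_pos (div_pos (hμpos i) (Real.exp_pos 1))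
    rw [Real.log_div (hμpos i).ne' (Real.exp_ne_zero 1), Real.log_exp] at h
    linarith
  have he : (1 : ℝ) < Real.exp 1 := by
    have := Real.exp_one_gt_d9
    linarith
  have hF : 0 ≤ frobSq M := frobSq_nonneg M
  have hop : sMax M ^ 2 ≤ frobSq M := sMax_sq_le_frobSq M
  have hL : 2 * Real.log |M.det| * Real.exp 1 ≤ frobSq M := by
    have : 2 * Real.log |M.det| ≤ frobSq M / Real.exp 1 := by
      rw [hlog, hfs]; exact hlogle
    rw [le_div_iff₀ (Real.exp_pos 1)] at this
    exact this
  rw [div_mul_eq_mul_div, le_div_iff₀ (by linarith : (0:ℝ) < Real.exp 1 - 1)]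
  nlinarith [mul_nonneg (sub_nonneg.2 hop) (sub_nonneg.2 he.le), Real.exp_pos 1,
    mul_le_mul_of_nonneg_right hop (Real.exp_pos 1).le]
end
end

section
/- Let A, J ∈ ℝ^{d×d} be nonsingular and x ∈ ℝ^d with ‖A x‖ > 1, and let Â be the update matrix for (A, x). Then ‖J·(ÂA)^{-1}‖_F² = ‖J·A^{-1}‖_F² + (1 − 1/‖A x‖²) · ‖J x‖². -/
noncomputable section

open scoped Pointwise

lemma mul_vecMulVec' {d : ℕ} (M : Matrix (Fin d) (Fin d) ℝ) (u v : Fin d → ℝ) :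
    M * Matrix.vecMulVec u v = Matrix.vecMulVec (M.mulVec u) v := by
  ext i j
  simp only [Matrix.mul_apply, Matrix.vecMulVec_apply, Matrix.mulVec, dotProduct,
    Finset.sum_mul]
  exact Finset.sum_congr rfl fun k _ => by ring

lemma norm_sq_eq' {d : ℕ} (v : EuclideanSpace ℝ (Fin d)) : ‖v‖ ^ 2 = ∑ i, v i ^ 2 := by
  rw [EuclideanSpace.norm_eq, Real.sq_sqrt (by positivity)]
  exact Finset.sum_congr rfl fun i _ => by rw [Real.norm_eq_abs, sq_abs]

/-- Frobenius-norm update formula: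
`‖J (ÂA)⁻¹‖_F² = ‖J A⁻¹‖_F² + (1 − 1/‖A x‖²) ‖J x‖²`. -/
theorem stmt7 (d : ℕ) (A J : Matrix (Fin d) (Fin d) ℝ)
    (hA : A.det ≠ 0) (hJ : J.det ≠ 0)
    (x : EuclideanSpace ℝ (Fin d)) (hx : 1 < ‖mulVecE A x‖) :
    frobSq (J * (updateMatrix A x * A)⁻¹) =
      frobSq (J * A⁻¹) + (1 - (‖mulVecE A x‖ ^ 2)⁻¹) * ‖mulVecE J x‖ ^ 2 := by
  have hAu : IsUnit A.det := hA.isUnit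
  set r : ℝ := ‖mulVecE A x‖ with hrdef
  have hr0 : r ≠ 0 := by positivity
  set y : Fin d → ℝ := (mulVecE A x).ofLp with hydef
  set u : Fin d → ℝ := J.mulVec x with hudef
  set c : ℝ := (1 - r⁻¹) / r ^ 2 with hcdef
  set c' : ℝ := (r - 1) / r ^ 2 with hc'def
  have hrsq : r ^ 2 = ∑ i, y i ^ 2 := norm_sq_eq' (mulVecE A x)
  set Y : Matrix (Fin d) (Fin d) ℝ := Matrix.vecMulVec y y with hYdef
  have hYY : Y * Y = r ^ 2 • Y := by
    ext i j
    simp only [hYdef, Matrix.mul_apply, Matrix.vecMulVec_apply, Matrix.smul_apply, smul_eq_mul,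
      hrsq, Finset.sum_mul]
    exact Finset.sum_congr rfl fun k _ => by ring
  have hAy : A.mulVec x = y := rfl
  -- inverse of (Â A)
  set B : Matrix (Fin d) (Fin d) ℝ := A⁻¹ + c' • Matrix.vecMulVec (x : Fin d → ℝ) y with hBdef
  have hAB : A * B = 1 + c' • Y := by
    rw [hBdef, Matrix.mul_add, Matrix.mul_nonsing_inv A hAu, Matrix.mul_smul,
      mul_vecMulVec', hAy]
  have hcoef : c' - c - c * c' * r ^ 2 = 0 := by
    rw [hcdef, hc'def]; field_simp; ring
  have hprod : updateMatrix A x * A * B = 1 := by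
    rw [mul_assoc, hAB, updateMatrix]
    show (1 - c • Y) * (1 + c' • Y) = 1
    rw [sub_mul, one_mul, mul_add, mul_one, Matrix.smul_mul, Matrix.mul_smul, hYY,
      smul_smul, smul_smul]
    have h2 : c' • Y - (c • Y + (c * c' * r ^ 2) • Y) = (c' - c - c * c' * r ^ 2) • Y := by
      module
    rw [add_sub_assoc, h2, hcoef, zero_smul, add_zero]
  have hinv : (updateMatrix A x * A)⁻¹ = B := Matrix.inv_eq_right_inv hprod
  have hJB : J * B = J * A⁻¹ + c' • Matrix.vecMulVec u y := by
    rw [hBdef, Matrix.mul_add, Matrix.mul_smul, mul_vecMulVec', hudef]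
  set M : Matrix (Fin d) (Fin d) ℝ := J * A⁻¹ with hMdef
  have hMy : M.mulVec y = u := by
    rw [hMdef, hudef, ← hAy, Matrix.mulVec_mulVec, mul_assoc, Matrix.nonsing_inv_mul A hAu,
      mul_one]
  have hrow : ∀ i, ∑ j, M i j * y j = u i := by
    intro i
    have := congrFun hMy i
    simpa [Matrix.mulVec, dotProduct] using this
  have husq : ‖mulVecE J x‖ ^ 2 = ∑ i, u i ^ 2 := norm_sq_eq' (mulVecE J x)
  rw [hinv, hJB]
  have expand : frobSq (M + c' • Matrix.vecMulVec u y)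
      = frobSq M + (2 * c' + c' ^ 2 * r ^ 2) * ∑ i, u i ^ 2 := by
    unfold frobSq
    rw [Finset.mul_sum, ← Finset.sum_add_distrib]
    apply Finset.sum_congr rfl
    intro i _
    calc ∑ j, ((M + c' • Matrix.vecMulVec u y) i j) ^ 2
        = ∑ j, (M i j ^ 2 + 2 * c' * u i * (M i j * y j) + c' ^ 2 * u i ^ 2 * y j ^ 2) := by
          apply Finset.sum_congr rfl
          intro j _
          simp only [Matrix.add_apply, Matrix.smul_apply, Matrix.vecMulVec_apply, smul_eq_mul]
          ring
      _ = (∑ j, M i j ^ 2) + 2 * c' * u i * (∑ j, M i j * y j)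
            + c' ^ 2 * u i ^ 2 * (∑ j, y j ^ 2) := by
          rw [Finset.sum_add_distrib, Finset.sum_add_distrib, Finset.mul_sum, Finset.mul_sum]
      _ = (∑ j, M i j ^ 2) + (2 * c' + c' ^ 2 * r ^ 2) * u i ^ 2 := by
          rw [hrow i, ← hrsq]; ring
  rw [expand, husq]
  have : 2 * c' + c' ^ 2 * r ^ 2 = 1 - (r ^ 2)⁻¹ := by
    rw [hc'def]; field_simp; ring
  rw [this]
end
end

section
/- Let A, J ∈ ℝ^{d×d} be nonsingular and x ∈ ℝ^d with ‖A x‖ > 1, and let Â be the update matrix for (A, x). Then ‖J·(ÂA)^{-1}‖_F² − ‖J·A^{-1}‖_F² ≤ 2 log(‖A x‖) · ‖J x‖². -/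
noncomputable section

open scoped Pointwise

/-- `‖J (ÂA)⁻¹‖_F² − ‖J A⁻¹‖_F² ≤ 2 log ‖A x‖ · ‖J x‖²`. -/
theorem stmt8 (d : ℕ) (A J : Matrix (Fin d) (Fin d) ℝ)
    (hA : A.det ≠ 0) (hJ : J.det ≠ 0)
    (x : EuclideanSpace ℝ (Fin d)) (hx : 1 < ‖mulVecE A x‖) :
    frobSq (J * (updateMatrix A x * A)⁻¹) - frobSq (J * A⁻¹) ≤
      2 * Real.log ‖mulVecE A x‖ * ‖mulVecE J x‖ ^ 2 := by
  classical
  have hA' : IsUnit A.det := isUnit_iff_ne_zero.mpr hA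
  set r : ℝ := ‖mulVecE A x‖ with hrdef
  have hr0 : (0:ℝ) < r := lt_trans one_pos hx
  set v : Fin d → ℝ := A.mulVec x with hv
  set u : Fin d → ℝ := J.mulVec x with hu
  have hs : ∑ k, v k ^ 2 = r ^ 2 := by
    rw [hrdef, EuclideanSpace.norm_eq, Real.sq_sqrt (by positivity)]
    exact Finset.sum_congr rfl fun k _ => by rw [Real.norm_eq_abs, sq_abs]; rfl
  have hus : ∑ k, u k ^ 2 = ‖mulVecE J x‖ ^ 2 := by
    rw [EuclideanSpace.norm_eq, Real.sq_sqrt (by positivity)]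
    exact Finset.sum_congr rfl fun k _ => by rw [Real.norm_eq_abs, sq_abs]; rfl
  set c : ℝ := (1 - r⁻¹) / r ^ 2 with hc
  set c' : ℝ := (r - 1) / r ^ 2 with hc'
  set W : Matrix (Fin d) (Fin d) ℝ := Matrix.vecMulVec v v with hW
  have WW : W * W = (r ^ 2) • W := by
    ext i j
    simp only [hW, Matrix.mul_apply, Matrix.vecMulVec_apply, Matrix.smul_apply, smul_eq_mul]
    calc ∑ k, v i * v k * (v k * v j) = ∑ k, v k ^ 2 * (v i * v j) :=
          Finset.sum_congr rfl fun k _ => by ring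
      _ = r ^ 2 * (v i * v j) := by rw [← Finset.sum_mul, hs]
  have key : updateMatrix A x * (1 + c' • W) = 1 := by
    have hup : updateMatrix A x = 1 - c • W := rfl
    rw [hup]
    have expand : (1 - c • W) * (1 + c' • W)
        = 1 + ((c' - c) • W - (c * (c' * r ^ 2)) • W) := by
      simp only [sub_mul, mul_add, one_mul, mul_one, smul_mul_assoc,
        mul_smul_comm, smul_smul, WW]
      module
    rw [expand, ← sub_smul]
    have hcoef : c' - c - c * (c' * r ^ 2) = 0 := by
      rw [hc, hc']
      field_simp
      ring
    rw [hcoef, zero_smul, add_zero]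
  have hinv : (updateMatrix A x)⁻¹ = 1 + c' • W := Matrix.inv_eq_right_inv key
  have hAiv : A⁻¹.mulVec v = x := by
    rw [hv, Matrix.mulVec_mulVec, Matrix.nonsing_inv_mul A hA', Matrix.one_mulVec]
  have hJAv : (J * A⁻¹).mulVec v = u := by
    rw [← Matrix.mulVec_mulVec, hAiv, hu]
  have hJW : J * A⁻¹ * W = Matrix.vecMulVec u v := by
    ext i j
    simp only [Matrix.mul_apply, hW, Matrix.vecMulVec_apply]
    calc ∑ k, (J * A⁻¹) i k * (v k * v j) = (∑ k, (J * A⁻¹) i k * v k) * v j := by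
          rw [Finset.sum_mul]; exact Finset.sum_congr rfl fun k _ => by ring
      _ = u i * v j := by
          rw [show ∑ k, (J * A⁻¹) i k * v k = ((J * A⁻¹).mulVec v) i from rfl, hJAv]
  have hMeq : J * (updateMatrix A x * A)⁻¹ = J * A⁻¹ + c' • Matrix.vecMulVec u v := by
    rw [Matrix.mul_inv_rev, hinv, mul_add, mul_add, mul_one, Matrix.mul_smul,
      Matrix.mul_smul, ← mul_assoc, hJW]
  have hMv : ∀ i, ∑ j, (J * A⁻¹) i j * v j = u i := fun i => by
    rw [show ∑ j, (J * A⁻¹) i j * v j = ((J * A⁻¹).mulVec v) i from rfl, hJAv]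
  have hfrob : frobSq (J * A⁻¹ + c' • Matrix.vecMulVec u v)
      = frobSq (J * A⁻¹) + (2 * c' + c' ^ 2 * r ^ 2) * (∑ i, u i ^ 2) := by
    simp only [frobSq, Matrix.add_apply, Matrix.smul_apply, Matrix.vecMulVec_apply,
      smul_eq_mul]
    have row : ∀ i, ∑ j, ((J * A⁻¹) i j + c' * (u i * v j)) ^ 2
        = (∑ j, (J * A⁻¹) i j ^ 2) + (2 * c' + c' ^ 2 * r ^ 2) * u i ^ 2 := by
      intro i
      have h1 : ∑ j, ((J * A⁻¹) i j + c' * (u i * v j)) ^ 2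
          = ∑ j, ((J * A⁻¹) i j ^ 2 + 2 * c' * u i * ((J * A⁻¹) i j * v j)
              + c' ^ 2 * u i ^ 2 * v j ^ 2) :=
        Finset.sum_congr rfl fun j _ => by ring
      rw [h1, Finset.sum_add_distrib, Finset.sum_add_distrib, ← Finset.mul_sum,
        ← Finset.mul_sum, hMv i, hs]
      ring
    rw [Finset.sum_congr rfl fun i _ => row i, Finset.sum_add_distrib, ← Finset.mul_sum]
  rw [hMeq, hfrob, hus]
  have husnn : (0:ℝ) ≤ ‖mulVecE J x‖ ^ 2 := by positivity
  have hcoef2 : 2 * c' + c' ^ 2 * r ^ 2 = 1 - (r ^ 2)⁻¹ := by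
    rw [hc']; field_simp; ring
  have hlog : 1 - (r ^ 2)⁻¹ ≤ 2 * Real.log r := by
    have h := Real.log_le_sub_one_of_pos (x := (r ^ 2)⁻¹) (by positivity)
    rw [Real.log_inv, Real.log_pow] at h
    push_cast at h
    linarith
  have hfin := mul_le_mul_of_nonneg_right (hcoef2.trans_le hlog) husnn
  linarith
end
end

section
/- Let 0 < r ≤ R and let J ∈ ℝ^{d×d} be nonsingular with 1/R ≤ σ_max(J) ≤ 1/r and σ_max(J)/σ_min(J) ≤ R/r. Let A_0 = (1/r)·I. Then Φ_J(A_0) ≤ d·(1 + 4 log(R/r)). -/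
noncomputable section

open scoped Pointwise

open Matrix MeasureTheory in
private lemma detCLM_aux {d : ℕ} (B : Matrix (Fin d) (Fin d) ℝ) :
    LinearMap.det
      ((Matrix.toEuclideanCLM (𝕜 := ℝ) B).toLinearMap) = B.det := by
  rw [Matrix.coe_toEuclideanCLM_eq_toEuclideanLin, Matrix.toEuclideanLin_eq_toLin,
    LinearMap.det_toLin]

open Matrix MeasureTheory in
private lemma abs_det_le_aux {d : ℕ} (B : Matrix (Fin d) (Fin d) ℝ) :
    |B.det| ≤ sMax B ^ d := by
  rcases Nat.eq_zero_or_pos d with hd | hd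
  · subst hd
    rw [pow_zero]
    have : B.det = 1 := Matrix.det_fin_zero
    rw [this]; norm_num
  haveI : Nontrivial (EuclideanSpace ℝ (Fin d)) := by
    have : 0 < Module.finrank ℝ (EuclideanSpace ℝ (Fin d)) := by simpa using hd
    exact Module.nontrivial_of_finrank_pos this
  set f := Matrix.toEuclideanCLM (𝕜 := ℝ) B with hf
  set E := EuclideanSpace ℝ (Fin d) with hE
  have hrank : Module.finrank ℝ E = d := by
    show Module.finrank ℝ (EuclideanSpace ℝ (Fin d)) = d
    simp
  have himg : f '' Metric.ball (0:E) 1 ⊆ Metric.closedBall 0 ‖f‖ := by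
    rintro _ ⟨x, hx, rfl⟩
    simp only [Metric.mem_ball, dist_zero_right] at hx
    simp only [Metric.mem_closedBall, dist_zero_right]
    calc ‖f x‖ ≤ ‖f‖ * ‖x‖ := f.le_opNorm x
    _ ≤ ‖f‖ * 1 := by nlinarith [norm_nonneg (f x), norm_nonneg f]
    _ = ‖f‖ := mul_one _
  have h1 : volume (f '' Metric.ball (0:E) 1) =
      ENNReal.ofReal |B.det| * volume (Metric.ball (0:E) 1) := by
    rw [Measure.addHaar_image_continuousLinearMap]
    congr 2
    rw [detCLM_aux]
  have h2 : volume (Metric.closedBall (0:E) ‖f‖) =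
      ENNReal.ofReal (‖f‖ ^ d) * volume (Metric.ball (0:E) 1) := by
    rw [Measure.addHaar_closedBall volume (0:E) (norm_nonneg f), hrank]
  have hle : volume (f '' Metric.ball (0:E) 1) ≤ volume (Metric.closedBall (0:E) ‖f‖) :=
    measure_mono himg
  rw [h1, h2] at hle
  have hpos : volume (Metric.ball (0:E) 1) ≠ 0 :=
    (Metric.measure_ball_pos volume (0:E) one_pos).ne'
  have hfin : volume (Metric.ball (0:E) 1) ≠ ⊤ :=
    (MeasureTheory.measure_ball_lt_top (x := (0:E)) (r := 1)).ne
  have h3 := (ENNReal.mul_le_mul_iff_left hpos hfin).mp hle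
  have h4 : (0:ℝ) ≤ ‖f‖ ^ d := pow_nonneg (norm_nonneg f) d
  exact (ENNReal.ofReal_le_ofReal_iff h4).mp h3

open Matrix in
private lemma frobSq_le_aux {d : ℕ} (B : Matrix (Fin d) (Fin d) ℝ) :
    frobSq B ≤ d * sMax B ^ 2 := by
  rw [frobSq, Finset.sum_comm]
  set f := Matrix.toEuclideanCLM (𝕜 := ℝ) B with hf
  have key : ∀ j, ∑ i, (B i j)^2 ≤ ‖f‖ ^ 2 := by
    intro j
    set x : EuclideanSpace ℝ (Fin d) := (WithLp.equiv 2 (Fin d → ℝ)).symm (Pi.single j 1) with hx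
    have hnx : ‖x‖ = 1 := by
      rw [hx]
      simpa using EuclideanSpace.norm_single (𝕜 := ℝ) j (1:ℝ)
    have hv : f x = (WithLp.equiv 2 (Fin d → ℝ)).symm (B *ᵥ Pi.single j 1) :=
      Matrix.toEuclideanCLM_toLp B _
    have hcol : ∀ i, (B *ᵥ Pi.single j (1:ℝ)) i = B i j := by
      intro i
      simp [Matrix.mulVec_single]
    have hnfx : ‖f x‖ ^ 2 = ∑ i, (B i j)^2 := by
      rw [hv, EuclideanSpace.norm_eq, Real.sq_sqrt (by positivity)]
      refine Finset.sum_congr rfl fun i _ => ?_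
      rw [show ((WithLp.equiv 2 (Fin d → ℝ)).symm (B *ᵥ Pi.single j (1:ℝ))) i
          = (B *ᵥ Pi.single j (1:ℝ)) i from rfl, hcol i]
      rw [Real.norm_eq_abs, sq_abs]
    have hle : ‖f x‖ ≤ ‖f‖ := by
      calc ‖f x‖ ≤ ‖f‖ * ‖x‖ := f.le_opNorm x
      _ = ‖f‖ := by rw [hnx, mul_one]
    calc ∑ i, (B i j)^2 = ‖f x‖ ^ 2 := hnfx.symm
    _ ≤ ‖f‖ ^ 2 := pow_le_pow_left₀ (norm_nonneg _) hle 2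
  calc ∑ j, ∑ i, (B i j)^2 ≤ ∑ _j : Fin d, ‖f‖^2 := Finset.sum_le_sum fun j _ => key j
  _ = d * ‖f‖ ^ 2 := by rw [Finset.sum_const, Finset.card_fin, nsmul_eq_mul]

/-- Initial potential bound: `Φ_J((1/r)·I) ≤ d (1 + 4 log (R/r))`. -/
theorem stmt10 (d : ℕ) (r R : ℝ) (hr : 0 < r) (hrR : r ≤ R)
    (J : Matrix (Fin d) (Fin d) ℝ) (hJ : J.det ≠ 0)
    (hJ1 : R⁻¹ ≤ sMax J) (hJ2 : sMax J ≤ r⁻¹)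
    (hJcond : sMax J / sMin J ≤ R / r) :
    potential J (r⁻¹ • (1 : Matrix (Fin d) (Fin d) ℝ)) ≤
      (d : ℝ) * (1 + 4 * Real.log (R / r)) := by
  have hR : 0 < R := lt_of_lt_of_le hr hrR
  rcases Nat.eq_zero_or_pos d with hd | hd
  · subst hd
    have h1 : (J * (r⁻¹ • (1 : Matrix (Fin 0) (Fin 0) ℝ))⁻¹).det = 1 := Matrix.det_fin_zero
    simp [potential, frobSq, h1]
  haveI : Nonempty (Fin d) := ⟨⟨0, hd⟩⟩
  -- inverse of the initial matrix
  have hAinv : (r⁻¹ • (1 : Matrix (Fin d) (Fin d) ℝ))⁻¹ = r • 1 := by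
    apply Matrix.inv_eq_right_inv
    rw [Matrix.smul_mul, Matrix.mul_smul, one_mul, smul_smul, inv_mul_cancel₀ hr.ne', one_smul]
  have hJA : J * (r • (1 : Matrix (Fin d) (Fin d) ℝ)) = r • J := by
    rw [Matrix.mul_smul, mul_one]
  rw [potential, hAinv, hJA]
  -- Frobenius part
  have hs0 : 0 < sMax J := lt_of_lt_of_le (by positivity) hJ1
  have hfrob : frobSq (r • J) ≤ (d : ℝ) := by
    have h1 : frobSq (r • J) = r^2 * frobSq J := by
      simp [frobSq, Matrix.smul_apply, smul_eq_mul, mul_pow, Finset.mul_sum]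
    have h2 : frobSq J ≤ d * sMax J ^ 2 := frobSq_le_aux J
    have h3 : sMax J ^ 2 ≤ (r⁻¹)^2 := pow_le_pow_left₀ hs0.le hJ2 2
    have h5 : (d:ℝ) * sMax J ^ 2 ≤ (d:ℝ) * (r⁻¹)^2 :=
      mul_le_mul_of_nonneg_left h3 (Nat.cast_nonneg d)
    have h6 : r^2 * frobSq J ≤ r^2 * ((d:ℝ) * (r⁻¹)^2) :=
      mul_le_mul_of_nonneg_left (h2.trans h5) (sq_nonneg r)
    have h7 : r^2 * ((d:ℝ) * (r⁻¹)^2) = d := by field_simp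
    rw [h1]
    linarith
  -- determinant part
  have hdetJ : (0:ℝ) < |J.det| := abs_pos.mpr hJ
  have hdetinv : (J⁻¹).det = (J.det)⁻¹ := by
    rw [Matrix.det_nonsing_inv, Ring.inverse_eq_inv]
  have hJinv_ne : J⁻¹ ≠ 0 := by
    intro h
    have : (J⁻¹).det = 0 := by rw [h]; exact Matrix.det_zero
    rw [hdetinv] at this
    exact hJ (by simpa using inv_eq_zero.mp this)
  have hne : Matrix.toEuclideanCLM (𝕜 := ℝ) (J⁻¹) ≠ 0 := by
    intro h
    apply hJinv_ne
    have h0 : Matrix.toEuclideanCLM (𝕜 := ℝ) (0 : Matrix (Fin d) (Fin d) ℝ) = 0 := map_zero _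
    exact (Matrix.toEuclideanCLM (n := Fin d) (𝕜 := ℝ)).injective (h.trans h0.symm)
  have ht : 0 < sMax J⁻¹ := by
    rw [sMax]
    exact norm_pos_iff.mpr hne
  -- bound sMax J⁻¹ ≤ R^2 / r
  have hst : sMax J * sMax J⁻¹ ≤ R / r := by
    have heq : sMax J / sMin J = sMax J * sMax J⁻¹ := by
      rw [sMin, div_eq_mul_inv, inv_inv]
    rw [← heq]
    exact hJcond
  have htb : sMax J⁻¹ ≤ R^2 / r := by
    have h5 : sMax J⁻¹ * R⁻¹ ≤ sMax J⁻¹ * sMax J :=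
      mul_le_mul_of_nonneg_left hJ1 ht.le
    have h6 : (0:ℝ) < R⁻¹ := by positivity
    rw [mul_comm (sMax J⁻¹) (sMax J)] at h5
    have h7 : sMax J⁻¹ * R⁻¹ ≤ R / r := le_trans h5 hst
    rw [div_eq_mul_inv, sq]
    calc sMax J⁻¹ = (sMax J⁻¹ * R⁻¹) * R := by field_simp
    _ ≤ (R / r) * R := mul_le_mul_of_nonneg_right h7 hR.le
    _ = R * R * r⁻¹ := by ring
  have hdetJinv : |J.det|⁻¹ ≤ (R^2 / r)^d := by
    have := abs_det_le_aux (J⁻¹)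
    rw [hdetinv, abs_inv] at this
    exact le_trans this (pow_le_pow_left₀ ht.le htb d)
  have hdetlb : ((r / R^2))^d ≤ |J.det| := by
    have hq : (0:ℝ) < R^2 / r := by positivity
    have h8 : ((R^2 / r)^d)⁻¹ ≤ |J.det| := by
      rw [← inv_inv |J.det|]
      exact inv_anti₀ (by positivity) hdetJinv
    calc (r / R^2)^d = ((R^2/r)⁻¹)^d := by rw [inv_div]
    _ = ((R^2/r)^d)⁻¹ := by rw [inv_pow]
    _ ≤ |J.det| := h8
  -- determinant of r • J
  have hdet_smul : |(r • J).det| = r^d * |J.det| := by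
    rw [Matrix.det_smul, abs_mul, abs_pow, abs_of_pos hr, Fintype.card_fin]
  have hXlb : ((r/R)^2)^d ≤ |(r • J).det| := by
    rw [hdet_smul]
    calc ((r/R)^2)^d = r^d * (r/R^2)^d := by
          rw [← mul_pow]
          congr 1
          field_simp
    _ ≤ r^d * |J.det| := mul_le_mul_of_nonneg_left hdetlb (by positivity)
  have hXpos : (0:ℝ) < ((r/R)^2)^d := by positivity
  have hlog : -(2 * d * Real.log (R/r)) ≤ Real.log |(r • J).det| := by
    have h9 : Real.log (((r/R)^2)^d) ≤ Real.log |(r • J).det| :=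
      Real.log_le_log (by positivity) hXlb
    have h10 : Real.log (((r/R)^2)^d) = d * (2 * Real.log (r/R)) := by
      rw [Real.log_pow, Real.log_pow]
      push_cast
      ring
    have h11 : Real.log (r/R) = -Real.log (R/r) := by
      rw [← Real.log_inv, inv_div]
    rw [h10, h11] at h9
    linarith
  have hlogRr : 0 ≤ Real.log (R/r) := Real.log_nonneg (by
    rw [le_div_iff₀ hr]; linarith)
  linarith
end
end

section
/- Let d be such that there exists a Hadamard basis v_1, …, v_d of ℝ^d, let ε ∈ (0, d−1) and C > 0. For each i ∈ [d], define the ellipsoid 𝓔_i = {x ∈ ℝ^d : (d−ε)·x_i² + (ε/(d−1))·Σ_{j≠i} x_j² ≤ 1}. Suppose 𝓔̂ is an origin-centered ellipsoid such that v_i ∈ 𝓔̂ for all i ∈ [d] and 𝓔̂ ⊆ C·𝓔_i for all i ∈ [d]. Then C ≥ √(d−ε). -/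
noncomputable section

open scoped Pointwise

open scoped RealInnerProductSpace

/-- Lower bound for monotonic streaming approximation of John's ellipsoid: if an
origin-centered ellipsoid `𝓔̂` contains a Hadamard basis `v₁, …, v_d` and is contained in
`C · 𝓔ᵢ` for every `i`, where
`𝓔ᵢ = {x : (d−ε)·xᵢ² + (ε/(d−1))·Σ_{j≠i} xⱼ² ≤ 1}`, then `C ≥ √(d−ε)`. -/
theorem stmt13 (d : ℕ) (v : Fin d → EuclideanSpace ℝ (Fin d))
    (hvnorm : ∀ i, ‖v i‖ = 1)
    (hvorth : ∀ i j, i ≠ j → ⟪v i, v j⟫ = 0)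
    (hvent : ∀ i j, v i j = 1 / Real.sqrt d ∨ v i j = -(1 / Real.sqrt d))
    (ε : ℝ) (hε0 : 0 < ε) (hε1 : ε < (d : ℝ) - 1)
    (C : ℝ) (hC : 0 < C)
    (Ei : Fin d → Set (EuclideanSpace ℝ (Fin d)))
    (hEi : ∀ i, Ei i = {y : EuclideanSpace ℝ (Fin d) |
      ((d : ℝ) - ε) * y i ^ 2 + (ε / ((d : ℝ) - 1)) * ∑ j ∈ Finset.univ.erase i, y j ^ 2 ≤ 1})
    (Ehat : Set (EuclideanSpace ℝ (Fin d)))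
    (A : Matrix (Fin d) (Fin d) ℝ) (hA : A.det ≠ 0) (hEhat : Ehat = Ellip A)
    (hmem : ∀ i, v i ∈ Ehat)
    (hsub : ∀ i, Ehat ⊆ C • Ei i) :
    Real.sqrt ((d : ℝ) - ε) ≤ C := by
  have hd1 : (1 : ℝ) < (d : ℝ) := by linarith
  have hdnat : 1 < d := by exact_mod_cast hd1
  have : Nonempty (Fin d) := ⟨⟨0, by omega⟩⟩
  -- orthonormal basis
  have hon : Orthonormal ℝ v := by
    rw [orthonormal_iff_ite]
    intro i j
    by_cases h : i = j
    · subst h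
      rw [if_pos rfl, real_inner_self_eq_norm_sq, hvnorm, one_pow]
    · simp [h, hvorth i j h]
  have hcard : Fintype.card (Fin d) = Module.finrank ℝ (EuclideanSpace ℝ (Fin d)) := by
    simp
  let b : OrthonormalBasis (Fin d) ℝ (EuclideanSpace ℝ (Fin d)) :=
    (basisOfOrthonormalOfCardEqFinrank hon hcard).toOrthonormalBasis
      (by rwa [coe_basisOfOrthonormalOfCardEqFinrank])
  have hb : ∀ j, b j = v j := by
    intro j
    simp [b, Module.Basis.coe_toOrthonormalBasis, coe_basisOfOrthonormalOfCardEqFinrank]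
  -- Parseval
  have parseval : ∀ x : EuclideanSpace ℝ (Fin d), ∑ j, ⟪x, v j⟫ ^ 2 = ‖x‖ ^ 2 := by
    intro x
    have := b.sum_inner_mul_inner x x
    simp only [hb] at this
    rw [real_inner_self_eq_norm_sq] at this
    rw [← this]
    congr 1
    ext j
    rw [sq, real_inner_comm x (v j)]
  -- column sums of squares
  set t : Fin d → ℝ := fun i => ∑ k, A k i ^ 2 with ht
  -- key sum bound
  have hsum : ∑ i, t i ≤ (d : ℝ) := by
    have h1 : ∀ j, ‖mulVecE A (v j)‖ ^ 2 ≤ 1 := by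
      intro j
      have := hmem j
      rw [hEhat] at this
      have h2 : ‖mulVecE A (v j)‖ ≤ 1 := this
      nlinarith [norm_nonneg (mulVecE A (v j))]
    have h2 : ∑ j, ‖mulVecE A (v j)‖ ^ 2 ≤ (d : ℝ) := by
      calc ∑ j, ‖mulVecE A (v j)‖ ^ 2 ≤ ∑ _j : Fin d, (1 : ℝ) :=
            Finset.sum_le_sum fun j _ => h1 j
        _ = (d : ℝ) := by simp
    have h3 : ∑ j, ‖mulVecE A (v j)‖ ^ 2 = ∑ i, t i := by
      have hrow : ∀ j, ‖mulVecE A (v j)‖ ^ 2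
          = ∑ k, ⟪(WithLp.equiv 2 (Fin d → ℝ)).symm (A k), v j⟫ ^ 2 := by
        intro j
        have hterm : ∀ k, mulVecE A (v j) k
            = ⟪(WithLp.equiv 2 (Fin d → ℝ)).symm (A k), v j⟫ := by
          intro k
          rw [PiLp.inner_apply]
          show (A.mulVec (v j).ofLp) k = _
          rw [Matrix.mulVec, dotProduct]
          simp [WithLp.equiv_symm_apply, mul_comm]
        rw [EuclideanSpace.norm_eq]
        rw [Real.sq_sqrt (by positivity)]
        refine Finset.sum_congr rfl fun k _ => ?_
        rw [Real.norm_eq_abs, sq_abs, hterm k]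
      calc ∑ j, ‖mulVecE A (v j)‖ ^ 2
          = ∑ j, ∑ k, ⟪(WithLp.equiv 2 (Fin d → ℝ)).symm (A k), v j⟫ ^ 2 := by
            exact Finset.sum_congr rfl fun j _ => hrow j
        _ = ∑ k, ∑ j, ⟪(WithLp.equiv 2 (Fin d → ℝ)).symm (A k), v j⟫ ^ 2 :=
            Finset.sum_comm
        _ = ∑ k, ‖(WithLp.equiv 2 (Fin d → ℝ)).symm (A k)‖ ^ 2 := by
            exact Finset.sum_congr rfl fun k _ => parseval _
        _ = ∑ k, ∑ i, A k i ^ 2 := by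
            refine Finset.sum_congr rfl fun k _ => ?_
            rw [EuclideanSpace.norm_eq, Real.sq_sqrt (by positivity)]
            simp [WithLp.equiv_symm_apply, Real.norm_eq_abs, sq_abs]
        _ = ∑ i, t i := Finset.sum_comm
    linarith
  -- pigeonhole: some column has t i ≤ 1
  have hpig : ∃ i, t i ≤ 1 := by
    by_contra h
    push_neg at h
    have : (d : ℝ) < ∑ i, t i := by
      calc (d : ℝ) = ∑ _i : Fin d, (1 : ℝ) := by simp
        _ < ∑ i, t i := Finset.sum_lt_sum_of_nonempty Finset.univ_nonempty fun i _ => h i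
    linarith
  obtain ⟨i, hti⟩ := hpig
  -- t i > 0
  have htpos : 0 < t i := by
    rcases (Finset.sum_nonneg fun k _ => sq_nonneg (A k i)).lt_or_eq with h | h
    · exact h
    · exfalso
      apply hA
      apply Matrix.det_eq_zero_of_column_eq_zero i
      intro k
      have := (Finset.sum_eq_zero_iff_of_nonneg fun k _ => sq_nonneg (A k i)).mp h.symm
      have hk := this k (Finset.mem_univ k)
      exact pow_eq_zero_iff (by norm_num) |>.mp hk
  -- the witness point
  set s : ℝ := Real.sqrt (t i) with hs
  have hspos : 0 < s := Real.sqrt_pos.mpr htpos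
  set x : EuclideanSpace ℝ (Fin d) := s⁻¹ • EuclideanSpace.single i 1 with hx
  have hnormx : ‖mulVecE A x‖ = 1 := by
    have hlin : mulVecE A x = s⁻¹ • mulVecE A (EuclideanSpace.single i 1) := by
      rw [hx]
      simp only [mulVecE, WithLp.ofLp_smul, Matrix.mulVec_smul, WithLp.toLp_smul]
    rw [hlin, norm_smul]
    have : ‖mulVecE A (EuclideanSpace.single i 1)‖ = s := by
      rw [EuclideanSpace.norm_eq, hs]
      congr 1
      rw [ht]
      congr 1
      ext k
      rw [Real.norm_eq_abs, sq_abs]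
      congr 1
      show (A.mulVec (EuclideanSpace.single i 1).ofLp) k = A k i
      rw [Matrix.mulVec, dotProduct]
      simp [EuclideanSpace.single_apply]
    rw [this, Real.norm_eq_abs, abs_inv, abs_of_pos hspos]
    exact inv_mul_cancel₀ hspos.ne'
  have hxE : x ∈ Ehat := by
    rw [hEhat]
    exact le_of_eq hnormx
  obtain ⟨y, hy, hyx⟩ := hsub i hxE
  rw [hEi i] at hy
  -- compute y coords
  have hyi : y i = C⁻¹ * s⁻¹ := by
    have h1 : x i = C * y i := by rw [← hyx]; rfl
    have hxi : x i = s⁻¹ := by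
      simp [hx, PiLp.smul_apply, EuclideanSpace.single_apply]
    rw [hxi] at h1
    have h2 : C * (C⁻¹ * s⁻¹) = s⁻¹ := by field_simp
    exact mul_left_cancel₀ hC.ne' (by rw [h2, ← h1])
  have hyj : ∀ j, j ≠ i → y j = 0 := by
    intro j hj
    have : x j = C * y j := by rw [← hyx]; rfl
    have hxj : x j = 0 := by
      simp [hx, PiLp.smul_apply, EuclideanSpace.single_apply, hj]
    rw [hxj] at this
    have := this.symm
    rcases mul_eq_zero.mp this with h | h
    · exact absurd h hC.ne'
    · exact h
  have hsum0 : ∑ j ∈ Finset.univ.erase i, y j ^ 2 = 0 := by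
    apply Finset.sum_eq_zero
    intro j hj
    rw [hyj j (Finset.mem_erase.mp hj).1]
    ring
  have hkey : ((d : ℝ) - ε) * (C⁻¹ * s⁻¹) ^ 2 ≤ 1 := by
    have := hy
    simp only [Set.mem_setOf_eq] at this
    rw [hyi, hsum0, mul_zero, add_zero] at this
    exact this
  have hs2 : s ^ 2 = t i := Real.sq_sqrt htpos.le
  have hC2 : (d : ℝ) - ε ≤ C ^ 2 := by
    have h1 : ((d : ℝ) - ε) ≤ C ^ 2 * s ^ 2 := by
      have hcs : 0 < C ^ 2 * s ^ 2 := by positivity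
      have := hkey
      rw [mul_pow, inv_pow, inv_pow] at this
      calc ((d : ℝ) - ε) = ((d : ℝ) - ε) * ((C ^ 2)⁻¹ * (s ^ 2)⁻¹) * (C ^ 2 * s ^ 2) := by
            field_simp
        _ ≤ 1 * (C ^ 2 * s ^ 2) := by
            apply mul_le_mul_of_nonneg_right this hcs.le
        _ = C ^ 2 * s ^ 2 := one_mul _
    have h2 : C ^ 2 * s ^ 2 ≤ C ^ 2 := by
      rw [hs2]
      nlinarith [sq_nonneg C]
    linarith
  calc Real.sqrt ((d : ℝ) - ε) ≤ Real.sqrt (C ^ 2) := Real.sqrt_le_sqrt hC2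
    _ = C := Real.sqrt_sq hC.le
end
end

section
/- Let d ≥ 1 and n ≥ 1 be integers and ξ ≥ 1. Let σ_{i,t} > 0 for i ∈ [d], t ∈ [n], and define S_t = Σ_{i=1}^d σ_{i,t}² and P_t = Σ_{i=1}^d log(σ_{i,t}²). Let Q_1 ≤ Q_2 ≤ … ≤ Q_n be a nondecreasing sequence with 0 < Q_t ≤ 1 for all t. Assume: (i) S_1 ≤ d; (ii) for all 1 ≤ u ≤ t ≤ n, S_t ≤ S_u + Q_t·(P_t − P_u); (iii) for all 2 ≤ t ≤ n, S_t ≤ S_{t−1} + d·Q_t; and (iv) σ_{i,t}² ≥ Q_t/ξ⁴ for all i ∈ [d], t ∈ [n]. Then S_n ≤ 6 + 28·d·log ξ + 16·d. -/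
noncomputable section

open scoped Pointwise

private lemma neg_mul_log_le_inv_e {x : ℝ} (hx : 0 < x) :
    -(x * Real.log x) ≤ Real.exp (-1) := by
  have h1 : Real.log x⁻¹ ≤ x⁻¹ * Real.exp (-1) := by
    have h := Real.log_le_sub_one_of_pos (show 0 < x⁻¹ * Real.exp (-1) by positivity)
    rw [Real.log_mul (by positivity) (Real.exp_ne_zero _), Real.log_exp] at h
    linarith
  rw [Real.log_inv] at h1
  have h2 := mul_le_mul_of_nonneg_left h1 hx.le
  have h3 : x * (x⁻¹ * Real.exp (-1)) = Real.exp (-1) := by field_simp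
  nlinarith [h2, h3]

private lemma neg_mul_log_mono {p m : ℝ} (hp : 0 < p) (hpm : p ≤ m)
    (hm : m ≤ Real.exp (-1)) : -(p * Real.log p) ≤ -(m * Real.log m) := by
  have hm0 : 0 < m := lt_of_lt_of_le hp hpm
  have hlm : Real.log m ≤ -1 := by
    have := Real.log_le_log hm0 hm
    rwa [Real.log_exp] at this
  have hqv : Real.log m - Real.log p ≤ m / p - 1 := by
    have h := Real.log_le_sub_one_of_pos (div_pos hm0 hp)
    rwa [Real.log_div hm0.ne' hp.ne'] at h
  have h4 : p * (Real.log m - Real.log p) ≤ m - p := by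
    have h6 := mul_le_mul_of_nonneg_left hqv hp.le
    have h5 : p * (m / p - 1) = m - p := by field_simp
    linarith
  nlinarith [h4, mul_nonneg (sub_nonneg.mpr hpm) (by linarith : (0:ℝ) ≤ -1 - Real.log m)]

private lemma exp_neg_one_lt : Real.exp (-1) < 0.36788 := by
  rw [Real.exp_neg]
  have h1 : (2.7182818283 : ℝ) < Real.exp 1 := Real.exp_one_gt_d9
  have h2 : (0:ℝ) < Real.exp 1 := Real.exp_pos 1
  have h3 : (Real.exp 1)⁻¹ * Real.exp 1 = 1 := inv_mul_cancel₀ h2.ne'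
  nlinarith [h1, h2, h3]

private lemma exp_neg_one_gt : (0.367879 : ℝ) < Real.exp (-1) := by
  rw [Real.exp_neg]
  have h1 : Real.exp 1 < 2.7182818286 := Real.exp_one_lt_d9
  have h2 : (0:ℝ) < Real.exp 1 := Real.exp_pos 1
  have h3 : (Real.exp 1)⁻¹ * Real.exp 1 = 1 := inv_mul_cancel₀ h2.ne'
  nlinarith [h1, h2, h3]


private lemma scal1 (L q v Xq Xv c : ℝ) (hL : 0 ≤ L) (hvq : v ≤ q) (hXq : Xq ≤ 0)
    (hc0 : 0 < c) (hc : c ≤ 0.6932)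
    (e2 : v * (Xq - Xv) ≤ q - v) (e3 : Xq - c ≤ Xv) :
    1 + (10*L+8)*v - 3*(v*Xv) + (v-q)*(Xv - 4*L) ≤ 1 + (10*L+8)*q - 3*(q*Xq) := by
  have h1 : 0 ≤ (q-v)*L := mul_nonneg (by linarith) hL
  have h2 : (q-v)*Xq ≤ 0 := mul_nonpos_of_nonneg_of_nonpos (by linarith) hXq
  have h3 : 0 ≤ (q-v)*(Xv-Xq+c) := mul_nonneg (by linarith) (by linarith)
  have hac : (q-v)*c ≤ (q-v)*0.6932 := mul_le_mul_of_nonneg_left hc (by linarith)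
  nlinarith [e2, h1, h2, h3, hac]

private lemma scal2A (L p q Xp Xq c : ℝ) (hL : 0 ≤ L) (hp : 0 < p) (h2p : 2*p ≤ q)
    (hq1 : q ≤ 1) (hc0 : 0 < c) (hc : c ≤ 0.6932) (hqXneg : q*Xq ≤ 0)
    (hmono : -(p*Xp) ≤ -(q/2*(Xq - c)))
    (hfrac : p/4*(1 + 6*L*q + 7*q - 2*(q*Xq)) ≤ p/4*(10+6*L)) :
    1 + (10*L+8)*p - 3*(p*Xp) + p*(2*c-1) ≤ (1 - p/4)*(1 + 6*L*q + 7*q - 2*(q*Xq)) := by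
  have hLp : L*(2*p) ≤ L*q := mul_le_mul_of_nonneg_left h2p hL
  have hLp0 : 0 ≤ L*p := mul_nonneg hL hp.le
  have hcp : c*(2*p) ≤ c*q := mul_le_mul_of_nonneg_left h2p hc0.le
  have hcq : q*c ≤ q*0.6932 := mul_le_mul_of_nonneg_left hc (by linarith)
  nlinarith [hmono, hfrac, hLp, hLp0, hcp, hcq, hqXneg, hp.le, hq1]

private lemma scal2B (L p q Xp Xq c : ℝ) (hL : 0 ≤ L) (hp : 0 < p) (h2p : 2*p ≤ q)
    (hq1 : q ≤ 1) (hc0 : 0 < c) (hc : c ≤ 0.6932)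
    (hbig : -(p*Xp) ≤ 0.36788) (hqXq_lb : q*Xq ≤ q*(q-1)) (hsmall : 0.7357 ≤ q)
    (hfrac : p/4*(1 + 6*L*q + 7*q - 2*(q*Xq)) ≤ p/4*(10+6*L)) :
    1 + (10*L+8)*p - 3*(p*Xp) + p*(2*c-1) ≤ (1 - p/4)*(1 + 6*L*q + 7*q - 2*(q*Xq)) := by
  have hLp : L*(2*p) ≤ L*q := mul_le_mul_of_nonneg_left h2p hL
  have hLp0 : 0 ≤ L*p := mul_nonneg hL hp.le
  have hcp : c*(2*p) ≤ c*q := mul_le_mul_of_nonneg_left h2p hc0.le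
  have hcq : q*c ≤ q*0.6932 := mul_le_mul_of_nonneg_left hc (by linarith)
  have hprod : 0 ≤ (1-q)*(q-0.7357) := mul_nonneg (by linarith) (by linarith)
  nlinarith [hbig, hfrac, hLp, hLp0, hcp, hcq, hqXq_lb, hprod, hp.le, hq1]

set_option maxHeartbeats 1000000 in
/-- The final potential-sum bound: under the invariants of the scale-independent algorithm,
`S_n ≤ 6 + 28·d·log ξ + 16·d`. -/
theorem stmt17 (d n : ℕ) (hd : 1 ≤ d) (hn : 1 ≤ n) (ξ : ℝ) (hξ : 1 ≤ ξ)
    (σ : Fin d → ℕ → ℝ) (hσ : ∀ i, ∀ t, 1 ≤ t → t ≤ n → 0 < σ i t)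
    (S P : ℕ → ℝ)
    (hS : ∀ t, S t = ∑ i, σ i t ^ 2)
    (hP : ∀ t, P t = ∑ i, Real.log (σ i t ^ 2))
    (Q : ℕ → ℝ)
    (hQmono : ∀ u t, 1 ≤ u → u ≤ t → t ≤ n → Q u ≤ Q t)
    (hQpos : ∀ t, 1 ≤ t → t ≤ n → 0 < Q t)
    (hQle : ∀ t, 1 ≤ t → t ≤ n → Q t ≤ 1)
    (hi : S 1 ≤ d)
    (hii : ∀ u t, 1 ≤ u → u ≤ t → t ≤ n → S t ≤ S u + Q t * (P t - P u))
    (hiii : ∀ t, 2 ≤ t → t ≤ n → S t ≤ S (t - 1) + d * Q t)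
    (hiv : ∀ i, ∀ t, 1 ≤ t → t ≤ n → Q t / ξ ^ 4 ≤ σ i t ^ 2) :
    S n ≤ 6 + 28 * d * Real.log ξ + 16 * d := by
  have hd1 : (1:ℝ) ≤ (d:ℝ) := by exact_mod_cast hd
  have hdpos : (0:ℝ) < (d:ℝ) := by linarith
  have hξ0 : (0:ℝ) < ξ := lt_of_lt_of_le one_pos hξ
  set L := Real.log ξ with hLdef
  have hL : 0 ≤ L := Real.log_nonneg hξ
  have hlog2lt : Real.log 2 < 0.6932 := lt_trans Real.log_two_lt_d9 (by norm_num)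
  have hlog2pos : (0:ℝ) < Real.log 2 := Real.log_pos one_lt_two
  haveI : NeZero d := ⟨by omega⟩
  -- S is positive
  have hSpos : ∀ t, 1 ≤ t → t ≤ n → 0 < S t := by
    intro t h1 h2
    rw [hS t]
    exact Finset.sum_pos (fun i _ => pow_pos (hσ i t h1 h2) 2) Finset.univ_nonempty
  -- lower bound on P
  have hPlow : ∀ t, 1 ≤ t → t ≤ n → (d:ℝ) * (Real.log (Q t) - 4 * L) ≤ P t := by
    intro t h1 h2
    rw [hP t]
    have hterm : ∀ i : Fin d, Real.log (Q t) - 4 * L ≤ Real.log (σ i t ^ 2) := by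
      intro i
      have hq : 0 < Q t := hQpos t h1 h2
      have hdiv : 0 < Q t / ξ ^ 4 := by positivity
      have h := Real.log_le_log hdiv (hiv i t h1 h2)
      rw [Real.log_div (ne_of_gt hq) (by positivity), Real.log_pow] at h
      push_cast at h
      linarith
    calc (d:ℝ) * (Real.log (Q t) - 4 * L) = ∑ _i : Fin d, (Real.log (Q t) - 4 * L) := by
          rw [Finset.sum_const, Finset.card_univ, Fintype.card_fin, nsmul_eq_mul]
      _ ≤ ∑ i, Real.log (σ i t ^ 2) := Finset.sum_le_sum (fun i _ => hterm i)
  -- upper bound on P (Jensen / AM-GM)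
  have hPup : ∀ t, 1 ≤ t → t ≤ n → P t ≤ (d:ℝ) * Real.log (S t / d) := by
    intro t h1 h2
    have hs : 0 < S t := hSpos t h1 h2
    have hterm : ∀ i : Fin d, Real.log (σ i t ^ 2)
        ≤ Real.log (S t / d) + (σ i t ^ 2 * d / S t - 1) := by
      intro i
      have hσ2 : 0 < σ i t ^ 2 := pow_pos (hσ i t h1 h2) 2
      have h3 : 0 < σ i t ^ 2 * d / S t := by positivity
      have h4 := Real.log_le_sub_one_of_pos h3
      have h5 : Real.log (σ i t ^ 2) = Real.log (S t / d) + Real.log (σ i t ^ 2 * d / S t) := by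
        rw [← Real.log_mul (by positivity) (ne_of_gt h3)]
        congr 1
        field_simp
      linarith
    have hsum := Finset.sum_le_sum (fun i (_ : i ∈ Finset.univ) => hterm i)
    rw [hP t]
    have hc : ∑ _i : Fin d, (Real.log (S t / d) + (σ _i t ^ 2 * (d:ℝ) / S t - 1))
        = (d:ℝ) * Real.log (S t / d) := by
      rw [Finset.sum_add_distrib, Finset.sum_sub_distrib, Finset.sum_const, Finset.sum_const,
        Finset.card_univ, Fintype.card_fin, nsmul_eq_mul, nsmul_eq_mul]
      have h6 : ∑ i : Fin d, σ i t ^ 2 * (d:ℝ) / S t = (∑ i : Fin d, σ i t ^ 2) * (d:ℝ) / S t := by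
        rw [← Finset.sum_div, ← Finset.sum_mul]
      rw [h6, ← hS t]
      field_simp
      ring
    calc ∑ i, Real.log (σ i t ^ 2)
        ≤ ∑ i : Fin d, (Real.log (S t / d) + (σ i t ^ 2 * (d:ℝ) / S t - 1)) := hsum
      _ = (d:ℝ) * Real.log (S t / d) := hc
  -- the key invariant
  have key : ∀ t, 1 ≤ t → t ≤ n →
      S t - Q t * P t ≤ (d:ℝ) * (1 + (10*L + 8) * Q t - 3 * (Q t * Real.log (Q t))) := by
    intro t
    induction t using Nat.strong_induction_on with
    | _ t ih =>
      intro h1t htn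
      have hq0 : 0 < Q t := hQpos t h1t htn
      have hq1 : Q t ≤ 1 := hQle t h1t htn
      have hXq : Real.log (Q t) ≤ 0 := Real.log_nonpos hq0.le hq1
      rcases Nat.eq_or_lt_of_le h1t with h1 | h2t
      · -- base case t = 1
        subst h1
        have hPl := hPlow 1 le_rfl htn
        have e1 := mul_le_mul_of_nonneg_left hPl hq0.le
        have h6 : 0 ≤ (d:ℝ) * (Q 1 * (6*L + 8 - 2*Real.log (Q 1))) :=
          mul_nonneg hdpos.le (mul_nonneg hq0.le (by linarith))
        linarith [e1, hi, h6]
      · -- inductive step, t ≥ 2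
        have h2t' : 2 ≤ t := h2t
        by_cases hex : ∃ u, 1 ≤ u ∧ u < t ∧ Q t ≤ 2 * Q u
        · -- Case 1: there is an earlier index with comparable Q
          obtain ⟨u, hu1, hut, huq⟩ := hex
          have hun : u ≤ n := le_trans hut.le htn
          have ihu := ih u hut hu1 hun
          have hv0 : 0 < Q u := hQpos u hu1 hun
          have hvq : Q u ≤ Q t := hQmono u t hu1 hut.le htn
          have hXv : Real.log (Q u) ≤ 0 := Real.log_nonpos hv0.le (le_trans hvq hq1)
          have hiiut := hii u t hu1 hut.le htn
          have hPlu := hPlow u hu1 hun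
          have e1 := mul_le_mul_of_nonpos_left hPlu (by linarith : Q u - Q t ≤ 0)
          have e2 : Q u * (Real.log (Q t) - Real.log (Q u)) ≤ Q t - Q u := by
            have h := Real.log_le_sub_one_of_pos (div_pos hq0 hv0)
            rw [Real.log_div hq0.ne' hv0.ne'] at h
            have h7 := mul_le_mul_of_nonneg_left h hv0.le
            have h8 : Q u * (Q t / Q u - 1) = Q t - Q u := by field_simp
            linarith
          have e3 : Real.log (Q t) - Real.log 2 ≤ Real.log (Q u) := by
            have h := Real.log_le_log (by linarith : (0:ℝ) < Q t / 2)
              (by linarith : Q t / 2 ≤ Q u)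
            rw [Real.log_div hq0.ne' (by norm_num : (2:ℝ) ≠ 0)] at h
            linarith
          have scal := scal1 L (Q t) (Q u) (Real.log (Q t)) (Real.log (Q u)) (Real.log 2)
            hL hvq hXq hlog2pos hlog2lt.le e2 (by linarith)
          have scald := mul_le_mul_of_nonneg_left scal hdpos.le
          linarith [hiiut, ihu, e1, scald]
        · -- Case 2: Q (t-1) < Q t / 2, use (iii)
          push_neg at hex
          have h1p : 1 ≤ t - 1 := by omega
          have hptn : t - 1 ≤ n := by omega
          have hp0 : 0 < Q (t-1) := hQpos (t-1) h1p hptn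
          have h2p : 2 * Q (t-1) < Q t := hex (t-1) h1p (by omega)
          have ihp := ih (t-1) (by omega) h1p hptn
          have hSp := hSpos (t-1) h1p hptn
          have hPupp := hPup (t-1) h1p hptn
          have hPlt := hPlow t h1t htn
          have hiiit := hiii t h2t' htn
          -- Jensen conversion for S (t-1)
          have e5 : Real.log (S (t-1) / d) ≤ S (t-1) / (4*d) + (2*Real.log 2 - 1) := by
            have hx : (0:ℝ) < S (t-1) / d / 4 := by positivity
            have h := Real.log_le_sub_one_of_pos hx
            have h2 : Real.log (S (t-1) / d / 4) = Real.log (S (t-1) / d) - Real.log 4 :=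
              Real.log_div (by positivity) (by norm_num)
            have h4 : Real.log (4:ℝ) = 2 * Real.log 2 := by
              rw [show (4:ℝ) = 2^2 by norm_num, Real.log_pow]
              push_cast; ring
            rw [h2, h4] at h
            have h9 : S (t-1) / d / 4 = S (t-1) / (4*d) := by
              rw [div_div, mul_comm]
            linarith
          have e6 : Q (t-1) * P (t-1) ≤ Q (t-1) * (S (t-1)/4)
              + Q (t-1) * ((d:ℝ)*(2*Real.log 2 - 1)) := by
            have ha := mul_le_mul_of_nonneg_left hPupp hp0.le
            have hb := mul_le_mul_of_nonneg_left
              (mul_le_mul_of_nonneg_left e5 hdpos.le) hp0.le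
            have hc : (d:ℝ) * (S (t-1)/(4*(d:ℝ)) + (2*Real.log 2 - 1))
                = S (t-1)/4 + (d:ℝ)*(2*Real.log 2 - 1) := by
              field_simp
            have hb2 : Q (t-1) * ((d:ℝ) * (S (t-1)/(4*(d:ℝ)) + (2*Real.log 2 - 1)))
                = Q (t-1) * (S (t-1)/4) + Q (t-1) * ((d:ℝ)*(2*Real.log 2 - 1)) := by
              rw [hc]; ring
            linarith [ha, hb, hb2]
          have e7 : S (t-1) * (1 - Q (t-1)/4)
              ≤ (d:ℝ)*(1 + (10*L+8)*Q (t-1) - 3*(Q (t-1)*Real.log (Q (t-1))))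
                + Q (t-1)*((d:ℝ)*(2*Real.log 2 - 1)) := by
            linarith [ihp, e6]
          have hq2p : 2 * Q (t-1) ≤ Q t := h2p.le
          have hqXq_ub : Q t - 1 ≤ Q t * Real.log (Q t) := by
            have h := Real.one_sub_inv_le_log_of_pos hq0
            have h2 := mul_le_mul_of_nonneg_left h hq0.le
            have h3 : Q t * (1 - (Q t)⁻¹) = Q t - 1 := by field_simp
            linarith
          have hXq_ub : Real.log (Q t) ≤ Q t - 1 := Real.log_le_sub_one_of_pos hq0
          have hR_ub : 1 + 6*L*(Q t) + 7*(Q t) - 2*(Q t * Real.log (Q t)) ≤ 10 + 6*L := by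
            have hLq : L * Q t ≤ L := by nlinarith [hL, hq1]
            nlinarith [hqXq_ub, hLq, hq1]
          have hfrac := mul_le_mul_of_nonneg_left hR_ub
            (by positivity : (0:ℝ) ≤ Q (t-1)/4)
          have hLp : L * (2 * Q (t-1)) ≤ L * Q t := mul_le_mul_of_nonneg_left hq2p hL
          have hplog2 : (2 * Q (t-1)) * Real.log 2 ≤ Q t * Real.log 2 :=
            mul_le_mul_of_nonneg_right hq2p hlog2pos.le
          have hqXneg : Q t * Real.log (Q t) ≤ 0 :=
            mul_nonpos_of_nonneg_of_nonpos hq0.le hXq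
          have scal2 : 1 + (10*L+8)*Q (t-1) - 3*(Q (t-1)*Real.log (Q (t-1)))
              + Q (t-1)*(2*Real.log 2 - 1)
              ≤ (1 - Q (t-1)/4) * (1 + 6*L*(Q t) + 7*(Q t) - 2*(Q t * Real.log (Q t))) := by
            by_cases hsmall : Q t ≤ 0.7357
            · have hmono := neg_mul_log_mono hp0 (by linarith : Q (t-1) ≤ Q t / 2)
                (by nlinarith [exp_neg_one_gt] : Q t / 2 ≤ Real.exp (-1))
              rw [show Real.log (Q t / 2) = Real.log (Q t) - Real.log 2 from
                Real.log_div hq0.ne' (by norm_num)] at hmono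
              exact scal2A L (Q (t-1)) (Q t) (Real.log (Q (t-1))) (Real.log (Q t)) (Real.log 2)
                hL hp0 hq2p hq1 hlog2pos hlog2lt.le hqXneg hmono hfrac
            · push_neg at hsmall
              have hbig : -(Q (t-1) * Real.log (Q (t-1))) ≤ 0.36788 :=
                le_trans (neg_mul_log_le_inv_e hp0) exp_neg_one_lt.le
              have hqXq_lb : Q t * Real.log (Q t) ≤ Q t * (Q t - 1) :=
                mul_le_mul_of_nonneg_left hXq_ub hq0.le
              exact scal2B L (Q (t-1)) (Q t) (Real.log (Q (t-1))) (Real.log (Q t)) (Real.log 2)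
                hL hp0 hq2p hq1 hlog2pos hlog2lt.le hbig hqXq_lb hsmall.le hfrac
          have hfacpos : (0:ℝ) < 1 - Q (t-1)/4 := by linarith
          have e8 : S (t-1) ≤ (d:ℝ) * (1 + 6*L*(Q t) + 7*(Q t) - 2*(Q t * Real.log (Q t))) := by
            have hsc := mul_le_mul_of_nonneg_left scal2 hdpos.le
            have e8' : S (t-1) * (1 - Q (t-1)/4)
                ≤ ((d:ℝ) * (1 + 6*L*(Q t) + 7*(Q t) - 2*(Q t * Real.log (Q t))))
                  * (1 - Q (t-1)/4) := by nlinarith [e7, hsc]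
            exact le_of_mul_le_mul_right e8' hfacpos
          have e9 := mul_le_mul_of_nonneg_left hPlt hq0.le
          linarith [hiiit, e8, e9]
  -- final conversion
  have hkey := key n hn le_rfl
  have hq0 : 0 < Q n := hQpos n hn le_rfl
  have hq1 : Q n ≤ 1 := hQle n hn le_rfl
  have hXq : Real.log (Q n) ≤ 0 := Real.log_nonpos hq0.le hq1
  have hSn : 0 < S n := hSpos n hn le_rfl
  have hPn := hPup n hn le_rfl
  have e5 : Real.log (S n / d) ≤ S n / (4*d) + (2*Real.log 2 - 1) := by
    have hx : (0:ℝ) < S n / d / 4 := by positivity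
    have h := Real.log_le_sub_one_of_pos hx
    have h2 : Real.log (S n / d / 4) = Real.log (S n / d) - Real.log 4 :=
      Real.log_div (by positivity) (by norm_num)
    have h4 : Real.log (4:ℝ) = 2 * Real.log 2 := by
      rw [show (4:ℝ) = 2^2 by norm_num, Real.log_pow]
      push_cast; ring
    rw [h2, h4] at h
    have h9 : S n / d / 4 = S n / (4*d) := by
      rw [div_div, mul_comm]
    linarith
  have e6 : Q n * P n ≤ Q n * (S n/4) + Q n * ((d:ℝ)*(2*Real.log 2 - 1)) := by
    have ha := mul_le_mul_of_nonneg_left hPn hq0.le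
    have hb := mul_le_mul_of_nonneg_left (mul_le_mul_of_nonneg_left e5 hdpos.le) hq0.le
    have hc : (d:ℝ) * (S n/(4*(d:ℝ)) + (2*Real.log 2 - 1))
        = S n/4 + (d:ℝ)*(2*Real.log 2 - 1) := by
      field_simp
    nlinarith [ha, hb, hc]
  have hqXq_ub : Q n - 1 ≤ Q n * Real.log (Q n) := by
    have h := Real.one_sub_inv_le_log_of_pos hq0
    have h2 := mul_le_mul_of_nonneg_left h hq0.le
    have h3 : Q n * (1 - (Q n)⁻¹) = Q n - 1 := by field_simp
    linarith
  have hSQ : Q n * S n ≤ S n := by nlinarith [hSn, hq1, hq0]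
  have hdQX := mul_le_mul_of_nonneg_left hqXq_ub hdpos.le
  have hdLQ : ((d:ℝ) * L) * Q n ≤ (d:ℝ) * L :=
    mul_le_of_le_one_right (mul_nonneg hdpos.le hL) hq1
  have hdQ : (d:ℝ) * Q n ≤ (d:ℝ) := mul_le_of_le_one_right hdpos.le hq1
  nlinarith [hkey, e6, hdQX, hdLQ, hdQ, hSQ, hlog2lt, hlog2pos, hd1, hL, hq0, hq1, hSn]
end
end

section
/- Let A = U·Σ^{-1}·V^T ∈ ℝ^{d×d}, where U and V are orthogonal matrices and Σ is a diagonal matrix with positive diagonal entries. Fix i ∈ [d], let w_i be the i-th column of V, and let z = τ·w_i for some τ > Σ_{ii} (so that ‖A z‖ = τ/Σ_{ii} > 1). Let Â be the update matrix for (A, z). Then Â·A = U·(Σ')^{-1}·V^T, where Σ' is the diagonal matrix with Σ'_{ii} = τ and Σ'_{jj} = Σ_{jj} for all j ≠ i. -/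
noncomputable section

open scoped Pointwise

open Matrix in
/-- Effect of the update along a singular direction: if `A = U Σ⁻¹ Vᵀ` in SVD form and
`z = τ · wᵢ` where `wᵢ` is the `i`-th column of `V` and `τ > Σᵢᵢ`, then
`Â·A = U (Σ')⁻¹ Vᵀ`, where `Σ'` agrees with `Σ` except that `Σ'ᵢᵢ = τ`. -/
theorem stmt18 (d : ℕ) (U V : Matrix (Fin d) (Fin d) ℝ)
    (hU : Uᵀ * U = 1) (hU' : U * Uᵀ = 1) (hV : Vᵀ * V = 1) (hV' : V * Vᵀ = 1)
    (σ : Fin d → ℝ) (hσ : ∀ j, 0 < σ j)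
    (A : Matrix (Fin d) (Fin d) ℝ)
    (hA : A = U * (Matrix.diagonal σ)⁻¹ * Vᵀ)
    (i : Fin d) (τ : ℝ) (hτ : σ i < τ)
    (z : EuclideanSpace ℝ (Fin d)) (hz : z = τ • (WithLp.toLp 2 (fun j => V j i) : EuclideanSpace ℝ (Fin d))) :
    updateMatrix A z * A = U * (Matrix.diagonal (Function.update σ i τ))⁻¹ * Vᵀ := by
  have hσi := hσ i
  have hτ0 : 0 < τ := lt_trans hσi hτ
  have hσ' : ∀ j, σ j ≠ 0 := fun j => (hσ j).ne'
  have hdinv : (Matrix.diagonal σ)⁻¹ = Matrix.diagonal (fun j => (σ j)⁻¹) := by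
    apply Matrix.inv_eq_right_inv
    rw [Matrix.diagonal_mul_diagonal]
    convert Matrix.diagonal_one with j
    exact mul_inv_cancel₀ (hσ' j)
  have hdinv' : (Matrix.diagonal (Function.update σ i τ))⁻¹ =
      Matrix.diagonal (fun j => (Function.update σ i τ j)⁻¹) := by
    apply Matrix.inv_eq_right_inv
    rw [Matrix.diagonal_mul_diagonal]
    convert Matrix.diagonal_one with j
    apply mul_inv_cancel₀
    rcases eq_or_ne j i with rfl | h
    · simp [hτ0.ne']
    · simp [Function.update_of_ne h, hσ' j]
  set u : EuclideanSpace ℝ (Fin d) := WithLp.toLp 2 (fun j => U j i) with hu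
  set r : ℝ := τ / σ i with hr
  have hr1 : 1 < r := (one_lt_div hσi).2 hτ
  have hr0 : 0 < r := lt_trans one_pos hr1
  have hAz : mulVecE A z = r • u := by
    have hcol : (fun j => V j i : Fin d → ℝ) = V *ᵥ Pi.single i 1 := by
      funext j; simp
    show WithLp.toLp 2 (A *ᵥ z.ofLp) = _
    rw [hz, WithLp.ofLp_smul, WithLp.ofLp_toLp, hcol, Matrix.mulVec_smul, Matrix.mulVec_mulVec, hA, hdinv]
    rw [Matrix.mul_assoc (U * Matrix.diagonal fun j => (σ j)⁻¹), hV, Matrix.mul_one]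
    ext j
    simp [u, hr, div_eq_mul_inv, mul_comm, Matrix.mul_diagonal]
    ring
  have hun : ‖u‖ = 1 := by
    have h2 : ‖u‖ ^ 2 = 1 := by
      rw [← real_inner_self_eq_norm_sq]
      have : (inner ℝ u u : ℝ) = (Uᵀ * U) i i := by
        rw [EuclideanSpace.inner_eq_star_dotProduct]
        simp [Matrix.mul_apply, u, dotProduct]
      rw [this, hU]; simp
    nlinarith [norm_nonneg u]
  have hnAz : ‖mulVecE A z‖ = r := by
    rw [hAz, norm_smul, hun, mul_one, Real.norm_eq_abs, abs_of_pos hr0]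
  -- updateMatrix simplification
  have hvmv : Matrix.vecMulVec (mulVecE A z) (mulVecE A z) =
      (r ^ 2) • Matrix.vecMulVec u u := by
    rw [hAz]
    ext j k
    simp [Matrix.vecMulVec_apply]
    ring
  have hUpd : updateMatrix A z =
      1 - (1 - r⁻¹) • Matrix.vecMulVec u u := by
    rw [updateMatrix, hnAz, hvmv, smul_smul,
      div_mul_cancel₀ _ (pow_ne_zero 2 hr0.ne')]
  have hvmvU : Matrix.vecMulVec u u = U * Matrix.diagonal (Pi.single i 1) * Uᵀ := by
    ext j k
    rw [Matrix.mul_apply]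
    simp only [Matrix.mul_diagonal, Matrix.vecMulVec_apply, Matrix.transpose_apply]
    rw [Finset.sum_eq_single i]
    · simp [u]
    · intro b _ hb; simp [Pi.single_apply, hb]
    · simp
  -- main computation
  have hdiag : Matrix.diagonal (fun j => (σ j)⁻¹) -
      (1 - r⁻¹) • (Matrix.diagonal (Pi.single i 1) * Matrix.diagonal (fun j => (σ j)⁻¹)) =
      Matrix.diagonal (fun j => (Function.update σ i τ j)⁻¹) := by
    rw [Matrix.diagonal_mul_diagonal, ← Matrix.diagonal_smul, Matrix.diagonal_sub]
    refine congrArg Matrix.diagonal (funext fun j => ?_)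
    simp only [Pi.smul_apply, smul_eq_mul]
    rcases eq_or_ne j i with rfl | h
    · simp only [Function.update_self, Pi.single_eq_same, one_mul, hr]
      rw [eq_comm, inv_eq_iff_eq_inv, eq_comm]
      field_simp
      rw [sub_sub_cancel, div_self (hσ' _)]
    · simp [Function.update_of_ne h, Pi.single_apply, h]
  rw [hUpd, hvmvU, hA, hdinv, hdinv']
  rw [Matrix.sub_mul, Matrix.one_mul]
  have hassoc : U * Matrix.diagonal (Pi.single i 1) * Uᵀ *
      (U * Matrix.diagonal (fun j => (σ j)⁻¹) * Vᵀ)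
      = U * (Matrix.diagonal (Pi.single i 1) * Matrix.diagonal (fun j => (σ j)⁻¹)) * Vᵀ := by
    rw [show U * Matrix.diagonal (Pi.single i 1) * Uᵀ *
        (U * Matrix.diagonal (fun j => (σ j)⁻¹) * Vᵀ)
        = U * Matrix.diagonal (Pi.single i 1) * (Uᵀ * U) *
          Matrix.diagonal (fun j => (σ j)⁻¹) * Vᵀ by
      simp only [Matrix.mul_assoc], hU, Matrix.mul_one]
    simp only [Matrix.mul_assoc]
  rw [Matrix.smul_mul, hassoc, ← Matrix.smul_mul, ← Matrix.mul_smul, ← Matrix.sub_mul,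
    ← Matrix.mul_sub, hdiag]
end
end
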